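/- arXiv:2304.06376 — 3 statements merged into one kernel-verified Lean document; each statement's English description precedes it below -/
import Mathlib

section
/- Let f : ℝ² → ℝ satisfy |f| ≤ a_m and f(x,y) = 0 whenever x² + y² > r0². Then for every ν1 > 0, the 2π-periodic function θ ↦ g_{ν1}(θ) = FT_f(ν1 cos θ, ν1 sin θ) is quasi-bandlimited with parameters k1 = 2π·ν1·r0 / 0.765 and γ = 0.765; that is, there exists d ≥ 0 such that its k-th Fourier series coefficient c_k satisfies |c_k| ≤ d·e^{−0.765·|k|} for all integers k with |k| ≥ 2π·ν1·r0 / 0.765. -/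
open MeasureTheory ProbabilityTheory Finset

noncomputable section

/-- The 2D Fourier transform `FT_f(u,v) = ∬ f(x,y) e^{-2πj(ux+vy)} dx dy`. -/
def FT2 (f : ℝ × ℝ → ℝ) (u v : ℝ) : ℂ :=
  ∫ p : ℝ × ℝ, (f p : ℂ) *
    Complex.exp (-(2 * (Real.pi : ℂ) * Complex.I) * ((u * p.1 + v * p.2 : ℝ) : ℂ))

section AuxQBL
open Complex intervalIntegral

lemma norm_exp_pm (z : ℂ) (s : ℂ) (hs : s = 1 ∨ s = -1) :
    ‖Complex.exp (s * z * I)‖ ≤ Real.exp |z.im| := by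
  rw [Complex.norm_exp]
  apply Real.exp_le_exp.2
  rcases hs with h | h <;> subst h <;> simp [Complex.mul_re, Complex.mul_im] <;>
    [exact neg_le_abs z.im; exact le_abs_self z.im]

lemma norm_cos_le' (z : ℂ) : ‖Complex.cos z‖ ≤ Real.exp |z.im| := by
  rw [Complex.cos]
  have h1 := norm_exp_pm z 1 (Or.inl rfl)
  have h2 := norm_exp_pm z (-1) (Or.inr rfl)
  simp only [one_mul, neg_one_mul] at h1 h2
  calc ‖(Complex.exp (z*I) + Complex.exp (-z*I))/2‖
      ≤ (‖Complex.exp (z*I)‖ + ‖Complex.exp (-z*I)‖)/2 := by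
        rw [norm_div]; rw [show ‖(2:ℂ)‖ = 2 by norm_num]
        gcongr; exact norm_add_le _ _
    _ ≤ (Real.exp |z.im| + Real.exp |z.im|)/2 := by gcongr
    _ = Real.exp |z.im| := by ring

lemma norm_sin_le' (z : ℂ) : ‖Complex.sin z‖ ≤ Real.exp |z.im| := by
  rw [Complex.sin]
  have h1 := norm_exp_pm z 1 (Or.inl rfl)
  have h2 := norm_exp_pm z (-1) (Or.inr rfl)
  simp only [one_mul, neg_one_mul] at h1 h2
  calc ‖(Complex.exp (-z*I) - Complex.exp (z*I)) * I / 2‖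
      = ‖Complex.exp (-z*I) - Complex.exp (z*I)‖/2 := by
        rw [norm_div, norm_mul]; simp
    _ ≤ (‖Complex.exp (-z*I)‖ + ‖Complex.exp (z*I)‖)/2 := by
        gcongr; exact norm_sub_le _ _
    _ ≤ (Real.exp |z.im| + Real.exp |z.im|)/2 := by gcongr
    _ = Real.exp |z.im| := by ring

lemma contour_shift (a b : ℂ) (k : ℤ) (c : ℝ) :
    (∫ θ in (0:ℝ)..(2*Real.pi),
        Complex.exp (a * Complex.cos θ + b * Complex.sin θ - I * k * θ))
    = ∫ θ in (0:ℝ)..(2*Real.pi),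
        Complex.exp (a * Complex.cos (θ + c*I) + b * Complex.sin (θ + c*I)
          - I * k * (θ + c*I)) := by
  set G : ℂ → ℂ := fun z => Complex.exp (a * Complex.cos z + b * Complex.sin z - I * k * z)
    with hG
  have hper : ∀ z : ℂ, G (z + 2*Real.pi) = G z := by
    intro z
    simp only [hG, Complex.cos_add_two_pi, Complex.sin_add_two_pi]
    rw [show a * Complex.cos z + b * Complex.sin z - I * k * (z + 2*Real.pi)
        = (a * Complex.cos z + b * Complex.sin z - I * k * z) + (-k : ℤ) * (2*Real.pi*I) by
          push_cast; ring]
    rw [Complex.exp_add, Complex.exp_int_mul_two_pi_mul_I, mul_one]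
  have hdiff : Differentiable ℂ G := by
    apply Complex.differentiable_exp.comp
    exact ((Complex.differentiable_cos.const_mul a).add
      (Complex.differentiable_sin.const_mul b)).sub (differentiable_id.const_mul (I * k))
  set w : ℂ := ⟨2*Real.pi, c⟩ with hw
  have hre : w.re = 2*Real.pi := rfl
  have him : w.im = c := rfl
  have h0re : (0:ℂ).re = 0 := rfl
  have h0im : (0:ℂ).im = 0 := rfl
  have hrect := Complex.integral_boundary_rect_eq_zero_of_differentiableOn G 0 w
    (hdiff.differentiableOn)
  rw [hre, him, h0re, h0im] at hrect
  have hv : (∫ y in (0:ℝ)..c, G ((2*Real.pi : ℝ) + y * I))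
      = ∫ y in (0:ℝ)..c, G ((0:ℝ) + y * I) := by
    apply intervalIntegral.integral_congr
    intro y _
    show G _ = G _
    have : ((2*Real.pi : ℝ) : ℂ) + y * I = (((0:ℝ):ℂ) + y * I) + 2*Real.pi := by push_cast; ring
    rw [this, hper]
  rw [hv] at hrect
  have h1 : (∫ x in (0:ℝ)..(2*Real.pi), G (x + (0:ℝ) * I))
      = ∫ x in (0:ℝ)..(2*Real.pi), G x := by
    apply intervalIntegral.integral_congr; intro x _
    show G _ = G _
    norm_num
  rw [h1] at hrect
  have : (∫ x in (0:ℝ)..(2*Real.pi), G x) = ∫ x in (0:ℝ)..(2*Real.pi), G (x + c * I) := by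
    have := hrect
    linear_combination this
  rw [this]

lemma ring_coeff_bound (ν1 x y R : ℝ) (k : ℤ) (hν : 0 ≤ ν1)
    (hx : |x| ≤ R) (hy : |y| ≤ R) :
    ‖∫ θ in (0:ℝ)..(2*Real.pi),
        Complex.exp ((-(2*(Real.pi:ℂ)*I) * ν1 * x) * Complex.cos θ
          + (-(2*(Real.pi:ℂ)*I) * ν1 * y) * Complex.sin θ - I * k * θ)‖
    ≤ 2*Real.pi * Real.exp (2*Real.pi*ν1*(2*R)*Real.exp 0.765)
        * Real.exp (-(0.765) * |(k:ℝ)|) := by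
  have hR : 0 ≤ R := le_trans (abs_nonneg x) hx
  set c : ℝ := if 0 ≤ k then -(0.765:ℝ) else 0.765 with hc
  have hcab : |c| = 0.765 := by
    rcases le_or_gt 0 k with h | h
    · rw [hc, if_pos h]; norm_num
    · rw [hc, if_neg (not_le.2 h)]; norm_num
  have hkc : (k:ℝ) * c = -(0.765) * |(k:ℝ)| := by
    rcases le_or_gt 0 k with h | h
    · have hk : |(k:ℝ)| = (k:ℝ) := _root_.abs_of_nonneg (by exact_mod_cast h)
      rw [hc, if_pos h, hk]; ring
    · have hk : |(k:ℝ)| = -(k:ℝ) := abs_of_neg (by exact_mod_cast h)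
      rw [hc, if_neg (not_le.2 h), hk]; ring
  have hnorm2pi : ‖(-(2*(Real.pi:ℂ)*I))‖ = 2*Real.pi := by
    rw [norm_neg, norm_mul, norm_mul, Complex.norm_I, Complex.norm_real]
    simp [_root_.abs_of_nonneg Real.pi_pos.le]
  rw [contour_shift]
  have key : ∀ θ : ℝ,
      ‖Complex.exp ((-(2*(Real.pi:ℂ)*I) * ν1 * x) * Complex.cos (θ + c*I)
          + (-(2*(Real.pi:ℂ)*I) * ν1 * y) * Complex.sin (θ + c*I) - I * k * (θ + c*I))‖
      ≤ Real.exp (2*Real.pi*ν1*(2*R)*Real.exp 0.765) * Real.exp (-(0.765) * |(k:ℝ)|) := by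
    intro θ
    set z : ℂ := (θ:ℂ) + c*I with hz
    have hzim : z.im = c := by simp [hz]
    rw [Complex.norm_exp, ← Real.exp_add]
    apply Real.exp_le_exp.2
    have hare : ‖(-(2*(Real.pi:ℂ)*I) * (ν1:ℂ) * (x:ℂ))‖ = 2*Real.pi*ν1*|x| := by
      rw [norm_mul, norm_mul, hnorm2pi, Complex.norm_real, Complex.norm_real,
        Real.norm_eq_abs, Real.norm_eq_abs, _root_.abs_of_nonneg hν]
    have hbre : ‖(-(2*(Real.pi:ℂ)*I) * (ν1:ℂ) * (y:ℂ))‖ = 2*Real.pi*ν1*|y| := by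
      rw [norm_mul, norm_mul, hnorm2pi, Complex.norm_real, Complex.norm_real,
        Real.norm_eq_abs, Real.norm_eq_abs, _root_.abs_of_nonneg hν]
    have hcz : ‖Complex.cos z‖ ≤ Real.exp 0.765 := by
      calc ‖Complex.cos z‖ ≤ Real.exp |z.im| := norm_cos_le' z
        _ = Real.exp 0.765 := by rw [hzim, hcab]
    have hsz : ‖Complex.sin z‖ ≤ Real.exp 0.765 := by
      calc ‖Complex.sin z‖ ≤ Real.exp |z.im| := norm_sin_le' z
        _ = Real.exp 0.765 := by rw [hzim, hcab]
    have h1 : ((-(2*(Real.pi:ℂ)*I) * ν1 * x) * Complex.cos z).re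
        ≤ 2*Real.pi*ν1*R * Real.exp 0.765 := by
      calc ((-(2*(Real.pi:ℂ)*I) * ν1 * x) * Complex.cos z).re
          ≤ ‖(-(2*(Real.pi:ℂ)*I) * ν1 * x) * Complex.cos z‖ := Complex.re_le_norm _
        _ = (2*Real.pi*ν1*|x|) * ‖Complex.cos z‖ := by rw [norm_mul, hare]
        _ ≤ (2*Real.pi*ν1*R) * Real.exp 0.765 := by
            apply mul_le_mul (by gcongr) hcz (norm_nonneg _) (by positivity)
    have h2 : ((-(2*(Real.pi:ℂ)*I) * ν1 * y) * Complex.sin z).re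
        ≤ 2*Real.pi*ν1*R * Real.exp 0.765 := by
      calc ((-(2*(Real.pi:ℂ)*I) * ν1 * y) * Complex.sin z).re
          ≤ ‖(-(2*(Real.pi:ℂ)*I) * ν1 * y) * Complex.sin z‖ := Complex.re_le_norm _
        _ = (2*Real.pi*ν1*|y|) * ‖Complex.sin z‖ := by rw [norm_mul, hbre]
        _ ≤ (2*Real.pi*ν1*R) * Real.exp 0.765 := by
            apply mul_le_mul (by gcongr) hsz (norm_nonneg _) (by positivity)
    have h3 : (I * (k:ℂ) * z).re = -((k:ℝ)*c) := by
      simp [hz, Complex.mul_re, Complex.mul_im]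
    rw [Complex.sub_re, Complex.add_re, h3]
    have he : (0:ℝ) < Real.exp 0.765 := Real.exp_pos _
    nlinarith [h1, h2, hkc]
  calc ‖∫ θ in (0:ℝ)..(2*Real.pi),
        Complex.exp ((-(2*(Real.pi:ℂ)*I) * ν1 * x) * Complex.cos (θ + c*I)
          + (-(2*(Real.pi:ℂ)*I) * ν1 * y) * Complex.sin (θ + c*I) - I * k * (θ + c*I))‖
      ≤ (Real.exp (2*Real.pi*ν1*(2*R)*Real.exp 0.765) * Real.exp (-(0.765) * |(k:ℝ)|))
          * |2*Real.pi - 0| :=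
        intervalIntegral.norm_integral_le_of_norm_le_const (fun θ _ => key θ)
    _ = 2*Real.pi * Real.exp (2*Real.pi*ν1*(2*R)*Real.exp 0.765)
        * Real.exp (-(0.765) * |(k:ℝ)|) := by
        rw [sub_zero, _root_.abs_of_pos Real.two_pi_pos]; ring

end AuxQBL

open Complex in
/-- If `|f| ≤ a_m` and `f` vanishes outside the disc of radius `r0`,
then for every `ν1 > 0` the ring `θ ↦ FT_f(ν1 cos θ, ν1 sin θ)` is quasi-bandlimited
with parameters `k1 = 2π ν1 r0 / 0.765`, `γ = 0.765`: its Fourier series coefficients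
`c k` satisfy `‖c k‖ ≤ d e^{-0.765 |k|}` for all `|k| ≥ 2π ν1 r0 / 0.765`. -/
theorem fourier_ring_is_qbl (a_m r0 : ℝ) (f : ℝ × ℝ → ℝ)
    (hf : Measurable f) (hbd : ∀ p, |f p| ≤ a_m)
    (hsupp : ∀ p : ℝ × ℝ, r0 ^ 2 < p.1 ^ 2 + p.2 ^ 2 → f p = 0)
    (ν1 : ℝ) (hν1 : 0 < ν1) :
    ∃ d : ℝ, 0 ≤ d ∧ ∀ k : ℤ, 2 * Real.pi * ν1 * r0 / 0.765 ≤ (|k| : ℤ) →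
      ‖((2 * Real.pi : ℝ) : ℂ)⁻¹ * ∫ θ in (0:ℝ)..(2 * Real.pi),
          FT2 f (ν1 * Real.cos θ) (ν1 * Real.sin θ) *
            Complex.exp (-(Complex.I * (k : ℂ) * (θ : ℂ)))‖
        ≤ d * Real.exp (-(0.765) * (|k| : ℤ)) := by
  have hπ := Real.pi_pos
  set R : ℝ := |r0| with hRdef
  have hR : 0 ≤ R := abs_nonneg r0
  -- integrability of f
  have hmS : MeasurableSet {p : ℝ × ℝ | p.1^2 + p.2^2 ≤ r0^2} :=
    measurableSet_le ((measurable_fst.pow_const 2).add (measurable_snd.pow_const 2))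
      measurable_const
  have habs : ∀ p : ℝ × ℝ, p.1^2 + p.2^2 ≤ r0^2 → |p.1| ≤ R ∧ |p.2| ≤ R := by
    intro p hp
    constructor <;>
      nlinarith [abs_nonneg p.1, _root_.sq_abs p.1, abs_nonneg p.2, _root_.sq_abs p.2, _root_.sq_abs r0,
        abs_nonneg r0, sq_nonneg p.1, sq_nonneg p.2]
  have hsub : {p : ℝ × ℝ | p.1^2 + p.2^2 ≤ r0^2} ⊆ Metric.closedBall 0 R := by
    intro p hp
    obtain ⟨h1, h2⟩ := habs p hp
    rw [Metric.mem_closedBall, Prod.dist_eq]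
    simp only [Prod.fst_zero, Prod.snd_zero, Real.dist_0_eq_abs]
    exact max_le h1 h2
  have hfin : volume {p : ℝ × ℝ | p.1^2 + p.2^2 ≤ r0^2} < ⊤ :=
    lt_of_le_of_lt (measure_mono hsub) (isCompact_closedBall 0 R).measure_lt_top
  have hfi : Integrable f := by
    have hfeq : f = Set.indicator {p : ℝ × ℝ | p.1^2 + p.2^2 ≤ r0^2} f := by
      funext p
      by_cases hp : p ∈ {p : ℝ × ℝ | p.1^2 + p.2^2 ≤ r0^2}
      · rw [Set.indicator_of_mem hp]
      · rw [Set.indicator_of_notMem hp]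
        exact hsupp p (not_le.1 hp)
    rw [hfeq, integrable_indicator_iff hmS]
    exact Measure.integrableOn_of_bounded hfin.ne hf.aestronglyMeasurable
      (Filter.Eventually.of_forall fun p => by rw [Real.norm_eq_abs]; exact hbd p)
  set M : ℝ := Real.exp (2*Real.pi*ν1*(2*R)*Real.exp 0.765) with hM
  set C : ℝ := ∫ p : ℝ × ℝ, ‖f p‖ with hC
  have hCnn : 0 ≤ C := integral_nonneg fun p => norm_nonneg _
  refine ⟨C * M, mul_nonneg hCnn (Real.exp_pos _).le, ?_⟩
  intro k _
  set E : ℝ → ℝ × ℝ → ℂ := fun θ p =>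
    (f p : ℂ) * Complex.exp ((-(2*(Real.pi:ℂ)*I) * ν1 * p.1) * Complex.cos (θ:ℂ)
      + (-(2*(Real.pi:ℂ)*I) * ν1 * p.2) * Complex.sin (θ:ℂ) - I * k * (θ:ℂ)) with hE
  have hA : ∀ θ : ℝ, FT2 f (ν1 * Real.cos θ) (ν1 * Real.sin θ)
      * Complex.exp (-(Complex.I * (k:ℂ) * (θ:ℂ))) = ∫ p : ℝ × ℝ, E θ p := by
    intro θ
    rw [FT2, ← MeasureTheory.integral_mul_const]
    congr 1
    funext p
    simp only [hE]
    rw [mul_assoc, ← Complex.exp_add]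
    congr 1
    push_cast [Complex.ofReal_cos, Complex.ofReal_sin]
    ring
  rw [intervalIntegral.integral_congr (g := fun θ => ∫ p : ℝ × ℝ, E θ p)
    (fun θ _ => hA θ)]
  rw [intervalIntegral.integral_of_le Real.two_pi_pos.le]
  haveI : IsFiniteMeasure (volume.restrict (Set.Ioc (0:ℝ) (2*Real.pi))) :=
    ⟨by rw [Measure.restrict_apply_univ]; exact measure_Ioc_lt_top⟩
  have hprod : Integrable (Function.uncurry E)
      ((volume.restrict (Set.Ioc (0:ℝ) (2*Real.pi))).prod volume) := by
    have hmeas : Measurable (Function.uncurry E) := by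
      apply Measurable.mul
      · exact Complex.measurable_ofReal.comp (hf.comp measurable_snd)
      · apply Measurable.cexp
        apply Measurable.sub
        · apply Measurable.add
          · exact ((Complex.measurable_ofReal.comp (measurable_snd.fst)).const_mul
              (-(2*(Real.pi:ℂ)*I) * ν1)).mul
              ((Complex.measurable_ofReal.comp measurable_fst).ccos)
          · exact ((Complex.measurable_ofReal.comp (measurable_snd.snd)).const_mul
              (-(2*(Real.pi:ℂ)*I) * ν1)).mul
              ((Complex.measurable_ofReal.comp measurable_fst).csin)
        · exact (Complex.measurable_ofReal.comp measurable_fst).const_mul (I * k)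
    apply Integrable.mono' ((integrable_const (1:ℝ)).mul_prod hfi.norm)
      hmeas.aestronglyMeasurable
    apply Filter.Eventually.of_forall
    rintro ⟨θ, p⟩
    show ‖E θ p‖ ≤ 1 * ‖f p‖
    rw [one_mul, hE]
    simp only []
    rw [norm_mul, Complex.norm_exp]
    have hre : ((-(2*(Real.pi:ℂ)*I) * ν1 * p.1) * Complex.cos (θ:ℂ)
        + (-(2*(Real.pi:ℂ)*I) * ν1 * p.2) * Complex.sin (θ:ℂ) - I * k * (θ:ℂ)).re = 0 := by
      rw [← Complex.ofReal_cos, ← Complex.ofReal_sin]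
      simp [Complex.mul_re, Complex.mul_im]
    rw [hre, Real.exp_zero, mul_one, Complex.norm_real]
  rw [MeasureTheory.integral_integral_swap hprod]
  have hsplit : ∀ p : ℝ × ℝ, (∫ θ in Set.Ioc (0:ℝ) (2*Real.pi), E θ p)
      = (f p : ℂ) * ∫ θ in Set.Ioc (0:ℝ) (2*Real.pi),
          Complex.exp ((-(2*(Real.pi:ℂ)*I) * ν1 * p.1) * Complex.cos (θ:ℂ)
            + (-(2*(Real.pi:ℂ)*I) * ν1 * p.2) * Complex.sin (θ:ℂ) - I * k * (θ:ℂ)) :=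
    fun p => MeasureTheory.integral_const_mul _ _
  set K : ℝ := 2*Real.pi * M * Real.exp (-(0.765) * |(k:ℝ)|) with hK
  have hKnn : 0 ≤ K := by positivity
  have hnormbd : ‖∫ p : ℝ × ℝ, ∫ θ in Set.Ioc (0:ℝ) (2*Real.pi), E θ p‖
      ≤ ∫ p : ℝ × ℝ, ‖f p‖ * K := by
    apply MeasureTheory.norm_integral_le_of_norm_le (hfi.norm.mul_const K)
    apply Filter.Eventually.of_forall
    intro p
    rw [hsplit p, norm_mul, Complex.norm_real]
    by_cases hfp : f p = 0
    · simp [hfp]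
    · have hp : p.1^2 + p.2^2 ≤ r0^2 := by
        by_contra hcon
        exact hfp (hsupp p (not_le.1 hcon))
      obtain ⟨h1, h2⟩ := habs p hp
      have hJ : ‖∫ θ in Set.Ioc (0:ℝ) (2*Real.pi),
          Complex.exp ((-(2*(Real.pi:ℂ)*I) * ν1 * p.1) * Complex.cos (θ:ℂ)
            + (-(2*(Real.pi:ℂ)*I) * ν1 * p.2) * Complex.sin (θ:ℂ) - I * k * (θ:ℂ))‖ ≤ K := by
        rw [← intervalIntegral.integral_of_le Real.two_pi_pos.le]
        exact ring_coeff_bound ν1 p.1 p.2 R k hν1.le h1 h2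
      exact mul_le_mul_of_nonneg_left hJ (norm_nonneg _)
  have hfinal : ∫ p : ℝ × ℝ, ‖f p‖ * K = C * K := MeasureTheory.integral_mul_const _ _
  rw [norm_mul]
  have hni : ‖((2 * Real.pi : ℝ) : ℂ)⁻¹‖ = (2*Real.pi)⁻¹ := by
    rw [norm_inv, Complex.norm_real, Real.norm_eq_abs, _root_.abs_of_pos Real.two_pi_pos]
  rw [hni]
  have hcast : |(k:ℝ)| = ((|k| : ℤ) : ℝ) := by push_cast [Int.cast_abs]; ring
  calc (2*Real.pi)⁻¹ * ‖∫ p : ℝ × ℝ, ∫ θ in Set.Ioc (0:ℝ) (2*Real.pi), E θ p‖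
      ≤ (2*Real.pi)⁻¹ * (C * K) := by
        rw [← hfinal]
        exact mul_le_mul_of_nonneg_left hnormbd (by positivity)
    _ = C * M * Real.exp (-(0.765) * ((|k| : ℤ) : ℝ)) := by
        rw [hK, ← hcast]
        field_simp
end
end

section
/- Let p : ℝ → ℂ be 1-periodic and differentiable with ‖p'‖_∞ ≤ L. Then there is an absolute constant C such that for every N and every i ∈ {1, …, N}, the i-th order statistic t_i of N i.i.d. Uniform(0,1) samples satisfies E[ |p(t_i) − p(i/N)|² ] ≤ L² · ( 1/(4N) + C/(N√N) ). -/
open MeasureTheory ProbabilityTheory Finset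

noncomputable section

open Set
open scoped ENNReal NNReal
set_option linter.unusedSectionVars false


lemma betaNat (j n : ℕ) : ∫ x in (0:ℝ)..1, x ^ j * (1 - x) ^ n
    = (j.factorial * n.factorial : ℝ) / (j + n + 1).factorial := by
  induction n generalizing j with
  | zero =>
      simp only [pow_zero, mul_one, integral_pow, one_pow, Nat.factorial_zero, Nat.cast_one,
        Nat.add_zero]
      rw [Nat.factorial_succ]
      push_cast
      rw [zero_pow (by omega)]
      have : (j:ℝ) + 1 ≠ 0 := by positivity
      have : (j.factorial : ℝ) ≠ 0 := by positivity
      field_simp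
      norm_num
  | succ n IH =>
      have h1 : ∀ x : ℝ, x ^ j * (1 - x) ^ (n + 1)
          = x ^ j * (1 - x) ^ n - x ^ (j + 1) * (1 - x) ^ n := fun x => by ring
      rw [intervalIntegral.integral_congr (g := fun x => x ^ j * (1-x) ^ n - x ^ (j+1) * (1-x) ^ n)
        (fun x _ => h1 x)]
      rw [intervalIntegral.integral_sub ((Continuous.intervalIntegrable (by continuity)) 0 1)
        ((Continuous.intervalIntegrable (by continuity)) 0 1), IH j, IH (j+1)]
      have e1 : ((j + (n + 1) + 1).factorial : ℝ) = (j+n+2) * (j+n+1).factorial := by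
        have : j + (n + 1) + 1 = (j+n+1)+1 := by omega
        rw [this, Nat.factorial_succ]; push_cast; ring
      have e2 : ((j + 1 + n + 1).factorial : ℝ) = (j+n+2) * (j+n+1).factorial := by
        have : j + 1 + n + 1 = (j+n+1)+1 := by omega
        rw [this, Nat.factorial_succ]; push_cast; ring
      have e3 : ((j+1).factorial : ℝ) = (j+1) * j.factorial := by
        rw [Nat.factorial_succ]; push_cast; ring
      have e4 : ((n+1).factorial : ℝ) = (n+1) * n.factorial := by
        rw [Nat.factorial_succ]; push_cast; ring
      rw [e1, e2, e3, e4]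
      have p1 : ((j+n+1).factorial : ℝ) ≠ 0 := by positivity
      have p2 : (j:ℝ)+n+2 ≠ 0 := by positivity
      have p3 : (j.factorial : ℝ) ≠ 0 := by positivity
      field_simp
      ring

lemma sumAux (k : ℕ) : ∑ m ∈ Finset.range k, (2*(m:ℝ)+2) = k^2 + k := by
  induction k with
  | zero => simp
  | succ k IH => rw [Finset.sum_range_succ, IH]; push_cast; ring


lemma count_binomial {Ω : Type} [MeasurableSpace Ω] (μ : Measure Ω) [IsProbabilityMeasure μ]
    {N : ℕ} (u : Fin N → Ω → ℝ) (hu_meas : ∀ i, Measurable (u i))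
    (hu_indep : iIndepFun u μ)
    (hu_map : ∀ i, Measure.map (u i) μ = (ENNReal.ofReal 1)⁻¹ • volume.restrict (Set.Icc 0 1))
    {x : ℝ} (hx0 : 0 ≤ x) (hx1 : x ≤ 1) [∀ j ω, Decidable (u j ω ≤ x)] (m : ℕ) :
    μ {ω | (Finset.univ.filter fun j => u j ω ≤ x).card = m}
      = (N.choose m) * ENNReal.ofReal x ^ m * ENNReal.ofReal (1-x) ^ (N - m) := by
  -- marginals
  have hIic : ∀ j, μ (u j ⁻¹' Set.Iic x) = ENNReal.ofReal x := by
    intro j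
    rw [← Measure.map_apply (hu_meas j) measurableSet_Iic, hu_map j, Measure.smul_apply,
      Measure.restrict_apply measurableSet_Iic]
    have : Set.Iic x ∩ Set.Icc 0 1 = Set.Icc 0 x := by
      ext y; simp only [Set.mem_inter_iff, Set.mem_Iic, Set.mem_Icc]
      constructor
      · rintro ⟨h1, h2, h3⟩; exact ⟨h2, h1⟩
      · rintro ⟨h1, h2⟩; exact ⟨h2, h1, h2.trans hx1⟩
    rw [this, Real.volume_Icc]
    simp
  have hIoi : ∀ j, μ (u j ⁻¹' Set.Ioi x) = ENNReal.ofReal (1 - x) := by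
    intro j
    rw [← Measure.map_apply (hu_meas j) measurableSet_Ioi, hu_map j, Measure.smul_apply,
      Measure.restrict_apply measurableSet_Ioi]
    have : Set.Ioi x ∩ Set.Icc 0 1 = Set.Ioc x 1 := by
      ext y; simp only [Set.mem_inter_iff, Set.mem_Ioi, Set.mem_Icc, Set.mem_Ioc]
      constructor
      · rintro ⟨h1, h2, h3⟩; exact ⟨h1, h3⟩
      · rintro ⟨h1, h2⟩; exact ⟨h1, hx0.trans h1.le, h2⟩
    rw [this, Real.volume_Ioc]
    simp
  -- the event for a fixed subset A
  have hsetA : ∀ A : Finset (Fin N), {ω | Finset.univ.filter (fun j => u j ω ≤ x) = A}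
      = ⋂ j, (if j ∈ A then u j ⁻¹' Set.Iic x else u j ⁻¹' Set.Ioi x) := by
    intro A
    ext ω
    simp only [Set.mem_setOf_eq, Set.mem_iInter]
    constructor
    · intro h j
      by_cases hj : j ∈ A
      · simpa [hj] using (Finset.mem_filter.mp (h ▸ hj : j ∈ Finset.univ.filter
          (fun j => u j ω ≤ x))).2
      · simp only [hj, if_false, Set.mem_preimage, Set.mem_Ioi]
        by_contra hcon
        exact hj (h ▸ Finset.mem_filter.mpr ⟨Finset.mem_univ j, not_lt.mp hcon⟩)
    · intro h
      ext j
      simp only [Finset.mem_filter, Finset.mem_univ, true_and]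
      constructor
      · intro hle
        by_contra hj
        have := h j
        simp only [hj, if_false, Set.mem_preimage, Set.mem_Ioi] at this
        exact absurd hle (not_le.mpr this)
      · intro hj
        have := h j
        simpa [hj] using this
  have hmeasA : ∀ A : Finset (Fin N),
      MeasurableSet {ω | Finset.univ.filter (fun j => u j ω ≤ x) = A} := by
    intro A
    rw [hsetA A]
    refine MeasurableSet.iInter fun j => ?_
    split_ifs
    · exact hu_meas j measurableSet_Iic
    · exact hu_meas j measurableSet_Ioi
  have hmuA : ∀ A : Finset (Fin N), μ {ω | Finset.univ.filter (fun j => u j ω ≤ x) = A}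
      = ENNReal.ofReal x ^ A.card * ENNReal.ofReal (1 - x) ^ (N - A.card) := by
    intro A
    rw [hsetA A, hu_indep.meas_iInter (fun j => ?_)]
    · have : ∀ j, μ (if j ∈ A then u j ⁻¹' Set.Iic x else u j ⁻¹' Set.Ioi x)
          = if j ∈ A then ENNReal.ofReal x else ENNReal.ofReal (1 - x) := by
        intro j; split_ifs with hj
        · exact hIic j
        · exact hIoi j
      simp only [this]
      rw [← Finset.prod_filter_mul_prod_filter_not Finset.univ (· ∈ A)]
      rw [Finset.prod_congr rfl (fun j hj => if_pos (Finset.mem_filter.mp hj).2),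
        Finset.prod_congr rfl (fun j hj => if_neg (Finset.mem_filter.mp hj).2),
        Finset.prod_const, Finset.prod_const]
      congr 1
      · congr 1
        rw [Finset.filter_univ_mem]
      · congr 1
        have : Finset.univ.filter (fun j => j ∉ A) = Aᶜ := by
          ext j; simp [Finset.mem_compl]
        rw [this, Finset.card_compl, Fintype.card_fin]
    · by_cases hj : j ∈ A
      · simp only [hj, if_true]
        exact ⟨Set.Iic x, measurableSet_Iic, rfl⟩
      · simp only [hj, if_false]
        exact ⟨Set.Ioi x, measurableSet_Ioi, rfl⟩
  -- decompose the event over subsets of cardinality m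
  have hdecomp : {ω | (Finset.univ.filter fun j => u j ω ≤ x).card = m}
      = ⋃ A ∈ Finset.powersetCard m (Finset.univ : Finset (Fin N)),
          {ω | Finset.univ.filter (fun j => u j ω ≤ x) = A} := by
    ext ω
    simp only [Set.mem_setOf_eq, Set.mem_iUnion, Finset.mem_powersetCard]
    constructor
    · intro h
      exact ⟨Finset.univ.filter (fun j => u j ω ≤ x), ⟨Finset.subset_univ _, h⟩, rfl⟩
    · rintro ⟨A, ⟨-, hA⟩, h⟩
      rw [h, hA]
  rw [hdecomp, measure_biUnion_finset ?_ (fun A _ => hmeasA A)]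
  · rw [Finset.sum_congr rfl (fun A hA => by
      rw [hmuA A, (Finset.mem_powersetCard.mp hA).2])]
    rw [Finset.sum_const, Finset.card_powersetCard, Finset.card_univ, Fintype.card_fin,
      nsmul_eq_mul, mul_assoc]
  · intro A hA B hB hAB
    simp only [Function.onFun]
    rw [Set.disjoint_left]
    intro ω hωA hωB
    exact hAB (hωA.symm.trans hωB)

lemma event_iff {N : ℕ} (u tv : Fin N → ℝ) (mono : Monotone tv) (σ : Equiv.Perm (Fin N))
    (hσ : ∀ j, tv j = u (σ j)) (i : Fin N) (x : ℝ) [DecidablePred fun j => u j ≤ x]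
    [DecidablePred fun j => tv j ≤ x] :
    tv i ≤ x ↔ (i : ℕ) + 1 ≤ (Finset.univ.filter fun j => u j ≤ x).card := by
  have hcard : (Finset.univ.filter fun j => u j ≤ x).card
      = (Finset.univ.filter fun j => tv j ≤ x).card := by
    have himg : (Finset.univ.filter fun j => u j ≤ x)
        = (Finset.univ.filter fun j => tv j ≤ x).image σ := by
      ext j
      simp only [Finset.mem_filter, Finset.mem_univ, true_and, Finset.mem_image]
      constructor
      · intro h
        exact ⟨σ.symm j, by rw [hσ]; simpa using h, by simp⟩
      · rintro ⟨a, ha, rfl⟩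
        rw [← hσ]; exact ha
    rw [himg, Finset.card_image_of_injective _ σ.injective]
  rw [hcard]
  constructor
  · intro h
    have hsub : Finset.Iic i ⊆ Finset.univ.filter fun j => tv j ≤ x := by
      intro j hj
      simp only [Finset.mem_filter, Finset.mem_univ, true_and]
      exact le_trans (mono (Finset.mem_Iic.mp hj)) h
    have := Finset.card_le_card hsub
    rwa [Fin.card_Iic] at this
  · intro h
    by_contra hx
    push_neg at hx
    have hsub : (Finset.univ.filter fun j => tv j ≤ x) ⊆ Finset.Iio i := by
      intro j hj
      simp only [Finset.mem_filter, Finset.mem_univ, true_and] at hj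
      rw [Finset.mem_Iio]
      by_contra hij
      exact absurd (le_trans (mono (not_lt.mp hij)) hj) (not_le.mpr hx)
    have := Finset.card_le_card hsub
    rw [Fin.card_Iio] at this
    omega


section
variable {Ω : Type} [MeasurableSpace Ω] (μ : Measure Ω) [IsProbabilityMeasure μ]
  {N : ℕ} (u : Fin N → Ω → ℝ) (t : Fin N → Ω → ℝ)

-- assume classical decidability
open Classical in
lemma count_meas (hu_meas : ∀ i, Measurable (u i)) (x : ℝ) :
    Measurable (fun ω => ((Finset.univ.filter fun j => u j ω ≤ x).card : ℕ)) := by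
  have : (fun ω => (Finset.univ.filter fun j => u j ω ≤ x).card)
      = fun ω => ∑ j, if u j ω ≤ x then 1 else 0 := by
    funext ω; rw [Finset.card_filter]
  rw [this]
  exact Finset.measurable_sum _ fun j _ =>
    Measurable.ite (measurableSet_le (hu_meas j) measurable_const)
      measurable_const measurable_const

open Classical in
lemma tset_eq (hts : ∀ ω, Monotone (fun i => t i ω) ∧
      ∃ σ : Equiv.Perm (Fin N), ∀ i, t i ω = u (σ i) ω) (i : Fin N) (x : ℝ) :
    {ω | t i ω ≤ x} = {ω | (i : ℕ) + 1 ≤ (Finset.univ.filter fun j => u j ω ≤ x).card} := by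
  ext ω
  obtain ⟨mono, σ, hσ⟩ := hts ω
  simpa using event_iff (fun j => u j ω) (fun j => t j ω) mono σ hσ i x

open Classical in
lemma t_meas (hu_meas : ∀ i, Measurable (u i))
    (hts : ∀ ω, Monotone (fun i => t i ω) ∧
      ∃ σ : Equiv.Perm (Fin N), ∀ i, t i ω = u (σ i) ω) (i : Fin N) :
    Measurable (t i) := by
  apply measurable_of_Iic
  intro x
  have : t i ⁻¹' Set.Iic x = {ω | (i : ℕ) + 1
      ≤ (Finset.univ.filter fun j => u j ω ≤ x).card} := by
    rw [← tset_eq u t hts i x]; rfl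
  rw [this]
  exact count_meas u hu_meas x measurableSet_Ici

open Classical in
lemma tail_formula [IsProbabilityMeasure μ] (hu_meas : ∀ i, Measurable (u i))
    (hu_indep : iIndepFun u μ)
    (hu_map : ∀ j, Measure.map (u j) μ = (ENNReal.ofReal 1)⁻¹ • volume.restrict (Set.Icc 0 1))
    (hts : ∀ ω, Monotone (fun i => t i ω) ∧
      ∃ σ : Equiv.Perm (Fin N), ∀ i, t i ω = u (σ i) ω)
    (i : Fin N) {x : ℝ} (hx0 : 0 ≤ x) (hx1 : x ≤ 1) :
    μ {ω | x < t i ω} = ∑ m ∈ Finset.range ((i : ℕ) + 1),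
      (N.choose m) * ENNReal.ofReal x ^ m * ENNReal.ofReal (1 - x) ^ (N - m) := by
  have hdec : {ω | x < t i ω} = ⋃ m ∈ Finset.range ((i : ℕ) + 1),
      {ω | (Finset.univ.filter fun j => u j ω ≤ x).card = m} := by
    ext ω
    have hiff := Set.ext_iff.mp (tset_eq u t hts i x) ω
    simp only [Set.mem_setOf_eq] at hiff
    simp only [Set.mem_setOf_eq, Set.mem_iUnion, Finset.mem_range]
    constructor
    · intro h
      refine ⟨(Finset.univ.filter fun j => u j ω ≤ x).card, ?_, rfl⟩
      by_contra hcon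
      exact absurd (hiff.mpr (by omega)) (not_le.mpr h)
    · rintro ⟨m, hm, hcard⟩
      by_contra hcon
      have := hiff.mp (not_lt.mp hcon)
      omega
  rw [hdec]
  refine (measure_biUnion_finset ?_ ?_).trans ?_
  · intro a ha b hb hab
    simp only [Function.onFun]
    rw [Set.disjoint_left]
    intro ω hωa hωb
    have ha' : (Finset.univ.filter fun j => u j ω ≤ x).card = a := hωa
    have hb' : (Finset.univ.filter fun j => u j ω ≤ x).card = b := hωb
    exact hab (ha'.symm.trans hb')
  · exact fun m _ => count_meas u hu_meas x (measurableSet_singleton m)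
  · exact Finset.sum_congr rfl fun m _ =>
      count_binomial μ u hu_meas hu_indep hu_map hx0 hx1 m

end
lemma lint_ofReal_Ioo (f : ℝ → ℝ) (hf : Continuous f) (hnn : ∀ x ∈ Set.Ioo (0:ℝ) 1, 0 ≤ f x) :
    ∫⁻ x in Set.Ioo (0:ℝ) 1, ENNReal.ofReal (f x)
      = ENNReal.ofReal (∫ x in (0:ℝ)..1, f x) := by
  rw [intervalIntegral.integral_of_le zero_le_one, integral_Ioc_eq_integral_Ioo,
    ofReal_integral_eq_lintegral_ofReal
      ((hf.integrableOn_Icc).mono_set Set.Ioo_subset_Icc_self)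
      (by filter_upwards [ae_restrict_mem measurableSet_Ioo] with x hx using hnn x hx)]

lemma lint_term (m n : ℕ) :
    ∫⁻ x in Set.Ioo (0:ℝ) 1, ENNReal.ofReal x ^ m * ENNReal.ofReal (1 - x) ^ n
      = ENNReal.ofReal ((m.factorial * n.factorial : ℝ) / (m + n + 1).factorial) := by
  have h : ∀ x ∈ Set.Ioo (0:ℝ) 1, ENNReal.ofReal x ^ m * ENNReal.ofReal (1 - x) ^ n
      = ENNReal.ofReal (x ^ m * (1 - x) ^ n) := fun x hx => by
    rw [← ENNReal.ofReal_pow hx.1.le, ← ENNReal.ofReal_pow (by linarith [hx.2] : (0:ℝ) ≤ 1 - x),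
      ← ENNReal.ofReal_mul (pow_nonneg hx.1.le m)]
  rw [setLIntegral_congr_fun measurableSet_Ioo h,
    lint_ofReal_Ioo _ (by continuity) (fun x hx => mul_nonneg (pow_nonneg hx.1.le m)
      (pow_nonneg (by linarith [hx.2]) n)), betaNat]

lemma lint_term2 (m n : ℕ) :
    ∫⁻ x in Set.Ioo (0:ℝ) 1, (ENNReal.ofReal x ^ m * ENNReal.ofReal (1 - x) ^ n)
        * ENNReal.ofReal (2 * x)
      = ENNReal.ofReal (2 * ((m+1).factorial * n.factorial : ℝ) / (m + n + 2).factorial) := by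
  have key : ∫ x in (0:ℝ)..1, x ^ m * (1 - x) ^ n * (2 * x)
      = 2 * ((m+1).factorial * n.factorial : ℝ) / (m + n + 2).factorial := by
    have : ∀ x : ℝ, x ^ m * (1 - x) ^ n * (2 * x) = 2 * (x ^ (m+1) * (1 - x) ^ n) :=
      fun x => by ring
    rw [intervalIntegral.integral_congr (fun x _ => this x),
      intervalIntegral.integral_const_mul, betaNat]
    rw [show m + 1 + n + 1 = m + n + 2 by omega]
    ring
  have h : ∀ x ∈ Set.Ioo (0:ℝ) 1, (ENNReal.ofReal x ^ m * ENNReal.ofReal (1 - x) ^ n)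
        * ENNReal.ofReal (2 * x)
      = ENNReal.ofReal (x ^ m * (1 - x) ^ n * (2 * x)) := fun x hx => by
    have h1 : (0:ℝ) ≤ x ^ m := pow_nonneg hx.1.le m
    have h2 : (0:ℝ) ≤ (1 - x) ^ n := pow_nonneg (by linarith [hx.2]) n
    rw [← ENNReal.ofReal_pow hx.1.le, ← ENNReal.ofReal_pow (by linarith [hx.2] : (0:ℝ) ≤ 1 - x),
      ← ENNReal.ofReal_mul h1, ← ENNReal.ofReal_mul (mul_nonneg h1 h2)]
  rw [setLIntegral_congr_fun measurableSet_Ioo h,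
    lint_ofReal_Ioo _ (by continuity) (fun x hx => mul_nonneg (mul_nonneg (pow_nonneg hx.1.le m)
      (pow_nonneg (by linarith [hx.2]) n)) (by linarith [hx.1])), key]

section
variable {Ω : Type} [MeasurableSpace Ω] (μ : Measure Ω) [IsProbabilityMeasure μ]
  {N : ℕ} (u : Fin N → Ω → ℝ) (t : Fin N → Ω → ℝ)

lemma t_mem_Icc (hu_meas : ∀ i, Measurable (u i))
    (hu_map : ∀ j, Measure.map (u j) μ = (ENNReal.ofReal 1)⁻¹ • volume.restrict (Set.Icc 0 1))
    (hts : ∀ ω, Monotone (fun i => t i ω) ∧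
      ∃ σ : Equiv.Perm (Fin N), ∀ i, t i ω = u (σ i) ω) (i : Fin N) :
    ∀ᵐ ω ∂μ, t i ω ∈ Set.Icc (0:ℝ) 1 := by
  have h : ∀ j, ∀ᵐ ω ∂μ, u j ω ∈ Set.Icc (0:ℝ) 1 := by
    intro j
    rw [ae_iff]
    have he : {ω | ¬ u j ω ∈ Set.Icc (0:ℝ) 1} = u j ⁻¹' (Set.Icc (0:ℝ) 1)ᶜ := rfl
    rw [he, ← Measure.map_apply (hu_meas j) measurableSet_Icc.compl, hu_map j,
      Measure.smul_apply, Measure.restrict_apply measurableSet_Icc.compl,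
      Set.compl_inter_self]
    simp
  filter_upwards [ae_all_iff.mpr h] with ω hω
  obtain ⟨-, σ, hσ⟩ := hts ω
  rw [hσ i]
  exact hω _

lemma tail_restrict (i : Fin N) (hae : ∀ᵐ ω ∂μ, t i ω ∈ Set.Icc (0:ℝ) 1) (w : ℝ → ℝ≥0∞) :
    ∫⁻ x in Set.Ioi (0:ℝ), μ {a | x < t i a} * w x
      = ∫⁻ x in Set.Ioo (0:ℝ) 1, μ {a | x < t i a} * w x := by
  rw [show Set.Ioi (0:ℝ) = Set.Ioo 0 1 ∪ Set.Ici 1 from (Set.Ioo_union_Ici_eq_Ioi zero_lt_one).symm,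
    lintegral_union measurableSet_Ici
      (Set.disjoint_left.mpr fun x hx hx' => absurd hx.2 (not_lt.mpr hx'))]
  have hz : ∀ x ∈ Set.Ici (1:ℝ), μ {a | x < t i a} * w x = 0 := by
    intro x hx
    have h0 : μ {a | x < t i a} = 0 := by
      refine measure_mono_null (fun a ha => ?_) (ae_iff.mp hae)
      simp only [Set.mem_setOf_eq] at ha ⊢
      intro hmem
      exact absurd ha (not_lt.mpr (hmem.2.trans hx))
    rw [h0, zero_mul]
  rw [setLIntegral_congr_fun measurableSet_Ici hz, lintegral_zero,
    add_zero]

end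

section
variable {Ω : Type} [MeasurableSpace Ω] (μ : Measure Ω) [IsProbabilityMeasure μ]
  {N : ℕ} (u : Fin N → Ω → ℝ) (t : Fin N → Ω → ℝ)

open Classical in
lemma moment1 (hu_meas : ∀ i, Measurable (u i))
    (hu_indep : iIndepFun u μ)
    (hu_map : ∀ j, Measure.map (u j) μ = (ENNReal.ofReal 1)⁻¹ • volume.restrict (Set.Icc 0 1))
    (hts : ∀ ω, Monotone (fun i => t i ω) ∧
      ∃ σ : Equiv.Perm (Fin N), ∀ i, t i ω = u (σ i) ω) (i : Fin N) :
    ∫⁻ ω, ENNReal.ofReal (t i ω) ∂μ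
      = ENNReal.ofReal ((((i:ℕ):ℝ) + 1) / (N + 1)) := by
  have hae := t_mem_Icc μ u t hu_meas hu_map hts i
  have hmeas := t_meas u t hu_meas hts i
  rw [lintegral_eq_lintegral_meas_lt μ (hae.mono fun ω h => h.1) hmeas.aemeasurable]
  have hres := tail_restrict μ t i hae (fun _ => 1)
  simp only [mul_one] at hres
  rw [hres, setLIntegral_congr_fun measurableSet_Ioo (
    (fun x hx => tail_formula μ u t hu_meas hu_indep hu_map hts i hx.1.le hx.2.le)),
    lintegral_finset_sum' _ (fun m _ => by fun_prop)]
  have hterm : ∀ m ∈ Finset.range ((i:ℕ)+1), (∫⁻ x in Set.Ioo (0:ℝ) 1,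
      ↑(N.choose m) * ENNReal.ofReal x ^ m * ENNReal.ofReal (1-x) ^ (N-m))
      = ENNReal.ofReal ((N.choose m : ℝ)
          * ((m.factorial * (N-m).factorial : ℝ) / (N+1).factorial)) := by
    intro m hm
    have hmN : m ≤ N := by
      have := i.isLt
      have := Finset.mem_range.mp hm
      omega
    simp_rw [mul_assoc]
    rw [lintegral_const_mul _ (by fun_prop), lint_term m (N-m),
      show m + (N - m) + 1 = N + 1 by omega, ← ENNReal.ofReal_natCast (N.choose m),
      ← ENNReal.ofReal_mul (Nat.cast_nonneg _)]
  rw [Finset.sum_congr rfl hterm, ← ENNReal.ofReal_sum_of_nonneg (fun m hm => by positivity)]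
  congr 1
  have hval : ∀ m ∈ Finset.range ((i:ℕ)+1), (N.choose m : ℝ)
      * ((m.factorial * (N-m).factorial : ℝ) / (N+1).factorial) = 1/(N+1) := by
    intro m hm
    have hmN : m ≤ N := by
      have := i.isLt
      have := Finset.mem_range.mp hm
      omega
    have hfac : ((N.choose m : ℝ)) * m.factorial * (N-m).factorial = N.factorial := by
      exact_mod_cast congrArg (Nat.cast (R := ℝ)) (Nat.choose_mul_factorial_mul_factorial hmN)
    have h1 : ((N+1).factorial : ℝ) = (N+1) * N.factorial := by
      rw [Nat.factorial_succ]; push_cast; ring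
    have hNf : (N.factorial : ℝ) ≠ 0 := by positivity
    have hN1 : ((N:ℝ)+1) ≠ 0 := by positivity
    calc (N.choose m : ℝ) * ((m.factorial * (N-m).factorial : ℝ) / (N+1).factorial)
        = ((N.choose m : ℝ) * m.factorial * (N-m).factorial) / (N+1).factorial := by ring
      _ = (N.factorial : ℝ) / (N+1).factorial := by rw [hfac]
      _ = 1/((N:ℝ)+1) := by
          rw [h1, mul_comm, div_mul_eq_div_div, div_self hNf]
  rw [Finset.sum_congr rfl hval, Finset.sum_const, Finset.card_range, nsmul_eq_mul]
  push_cast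
  ring

open Classical in
lemma moment2 (hu_meas : ∀ i, Measurable (u i))
    (hu_indep : iIndepFun u μ)
    (hu_map : ∀ j, Measure.map (u j) μ = (ENNReal.ofReal 1)⁻¹ • volume.restrict (Set.Icc 0 1))
    (hts : ∀ ω, Monotone (fun i => t i ω) ∧
      ∃ σ : Equiv.Perm (Fin N), ∀ i, t i ω = u (σ i) ω) (i : Fin N) :
    ∫⁻ ω, ENNReal.ofReal (t i ω ^ 2) ∂μ
      = ENNReal.ofReal (((((i:ℕ):ℝ)+1)^2 + (((i:ℕ):ℝ)+1)) / ((N + 1) * (N + 2))) := by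
  have hae := t_mem_Icc μ u t hu_meas hu_map hts i
  have hmeas := t_meas u t hu_meas hts i
  have hpt : ∀ y : ℝ, (∫ s in (0:ℝ)..y, 2*s) = y^2 := fun y => by
    rw [intervalIntegral.integral_const_mul, integral_id]; ring
  have hrw : (fun ω => ENNReal.ofReal (t i ω ^ 2))
      = fun ω => ENNReal.ofReal (∫ s in (0:ℝ)..(t i ω), 2*s) := funext fun ω => by rw [hpt]
  rw [hrw, lintegral_comp_eq_lintegral_meas_lt_mul (g := fun s => 2*s) μ
    (hae.mono fun ω h => h.1)
    hmeas.aemeasurable (fun s hs => ((continuous_const.mul continuous_id').intervalIntegrable 0 s))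
    (by filter_upwards [ae_restrict_mem measurableSet_Ioi] with s hs; simp at hs; linarith)]
  rw [tail_restrict μ t i hae (fun x => ENNReal.ofReal (2*x)),
    setLIntegral_congr_fun measurableSet_Ioo (
      (fun x hx => by rw [tail_formula μ u t hu_meas hu_indep hu_map hts i hx.1.le hx.2.le,
        Finset.sum_mul])),
    lintegral_finset_sum' _ (fun m _ => by fun_prop)]
  have hterm : ∀ m ∈ Finset.range ((i:ℕ)+1), (∫⁻ x in Set.Ioo (0:ℝ) 1,
      ↑(N.choose m) * ENNReal.ofReal x ^ m * ENNReal.ofReal (1-x) ^ (N-m)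
        * ENNReal.ofReal (2*x))
      = ENNReal.ofReal ((N.choose m : ℝ)
          * (2 * ((m+1).factorial * (N-m).factorial : ℝ) / (N+2).factorial)) := by
    intro m hm
    have hmN : m ≤ N := by
      have := i.isLt
      have := Finset.mem_range.mp hm
      omega
    have hassoc : ∀ x : ℝ, ↑(N.choose m) * ENNReal.ofReal x ^ m * ENNReal.ofReal (1-x) ^ (N-m)
        * ENNReal.ofReal (2*x)
        = ↑(N.choose m) * ((ENNReal.ofReal x ^ m * ENNReal.ofReal (1-x) ^ (N-m))
          * ENNReal.ofReal (2*x)) := fun x => by ring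
    simp_rw [hassoc]
    rw [lintegral_const_mul _ (by fun_prop), lint_term2 m (N-m),
      show m + (N - m) + 2 = N + 2 by omega, ← ENNReal.ofReal_natCast (N.choose m),
      ← ENNReal.ofReal_mul (Nat.cast_nonneg _)]
  rw [Finset.sum_congr rfl hterm, ← ENNReal.ofReal_sum_of_nonneg (fun m hm => by positivity)]
  congr 1
  have hval : ∀ m ∈ Finset.range ((i:ℕ)+1), (N.choose m : ℝ)
      * (2 * ((m+1).factorial * (N-m).factorial : ℝ) / (N+2).factorial)
      = (2*(m:ℝ)+2) / ((N+1) * (N+2)) := by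
    intro m hm
    have hmN : m ≤ N := by
      have := i.isLt
      have := Finset.mem_range.mp hm
      omega
    have hfac : ((N.choose m : ℝ)) * m.factorial * (N-m).factorial = N.factorial := by
      exact_mod_cast congrArg (Nat.cast (R := ℝ)) (Nat.choose_mul_factorial_mul_factorial hmN)
    have h1 : ((N+2).factorial : ℝ) = (N+2) * (N+1) * N.factorial := by
      rw [show N + 2 = (N+1)+1 by omega, Nat.factorial_succ, Nat.factorial_succ]
      push_cast; ring
    have h2 : ((m+1).factorial : ℝ) = (m+1) * m.factorial := by
      rw [Nat.factorial_succ]; push_cast; ring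
    have hNf : (N.factorial : ℝ) ≠ 0 := by positivity
    have hN1 : ((N:ℝ)+1) ≠ 0 := by positivity
    have hN2 : ((N:ℝ)+2) ≠ 0 := by positivity
    calc (N.choose m : ℝ) * (2 * ((m+1).factorial * (N-m).factorial : ℝ) / (N+2).factorial)
        = ((N.choose m : ℝ) * m.factorial * (N-m).factorial) * (2*((m:ℝ)+1)) / (N+2).factorial := by
          rw [h2]; ring
      _ = (N.factorial : ℝ) * (2*((m:ℝ)+1)) / (N+2).factorial := by rw [hfac]
      _ = (2*(m:ℝ)+2) / ((N+1) * (N+2)) := by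
          rw [h1]; field_simp
  rw [Finset.sum_congr rfl hval, ← Finset.sum_div, sumAux]
  push_cast
  ring_nf

end



/-- `t` is the vector of order statistics of `N` i.i.d. samples from the uniform
distribution on the interval `[0, b]`: there exist i.i.d. random variables `u i`,
each uniformly distributed on `[0, b]`, such that for every `ω` the vector
`(t i ω)_i` is the monotone rearrangement of `(u i ω)_i`. -/
def IsUniformOrderStats {Ω : Type*} [MeasurableSpace Ω] (μ : Measure Ω) (b : ℝ)
    {N : ℕ} (t : Fin N → Ω → ℝ) : Prop :=
  ∃ u : Fin N → Ω → ℝ,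
    (∀ i, Measurable (u i)) ∧
    iIndepFun u μ ∧
    (∀ i, Measure.map (u i) μ = (ENNReal.ofReal b)⁻¹ • volume.restrict (Set.Icc 0 b)) ∧
    ∀ ω, Monotone (fun i => t i ω) ∧ ∃ σ : Equiv.Perm (Fin N), ∀ i, t i ω = u (σ i) ω

set_option maxHeartbeats 1000000 in
/-- There is an absolute constant `C` such that, for any 1-periodic
differentiable `p` with `‖p'‖_∞ ≤ L`, every `N`, and every `i ∈ {1, …, N}`,
`E[|p(t_i) − p(i/N)|²] ≤ L² (1/(4N) + C/(N√N))`. -/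
theorem smooth_function_order_stat_bound :
    ∃ C : ℝ, ∀ (p : ℝ → ℂ) (L : ℝ) (N : ℕ) (Ω : Type) [MeasurableSpace Ω]
      (μ : Measure Ω) [IsProbabilityMeasure μ] (t : Fin N → Ω → ℝ) (i : Fin N),
      Function.Periodic p 1 →
      Differentiable ℝ p →
      (∀ x : ℝ, ‖deriv p x‖ ≤ L) →
      IsUniformOrderStats μ 1 t →
      (∫ ω, ‖p (t i ω) - p (((i.1 : ℝ) + 1) / N)‖ ^ 2 ∂μ)
        ≤ L ^ 2 * (1 / (4 * N) + C / (N * Real.sqrt N)) := by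
  classical
  use 1
  intro p L N Ω _ μ _ t i hper hdiff hL hU
  obtain ⟨u, hu_meas, hu_indep, hu_map, hts⟩ := hU
  have hN : 0 < N := i.pos
  have hL0 : 0 ≤ L := le_trans (norm_nonneg _) (hL 0)
  set c : ℝ := ((i.1 : ℝ) + 1) / N with hc
  have hmeas : Measurable (t i) := t_meas u t hu_meas hts i
  have hae : ∀ᵐ ω ∂μ, t i ω ∈ Set.Icc (0:ℝ) 1 := t_mem_Icc μ u t hu_meas hu_map hts i
  have hlip : ∀ x y : ℝ, ‖p x - p y‖ ≤ L * |x - y| := by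
    intro x y
    have := Convex.norm_image_sub_le_of_norm_deriv_le (f := p) (s := Set.univ)
      (fun z _ => hdiff z) (fun z _ => hL z) convex_univ (Set.mem_univ y) (Set.mem_univ x)
    simpa [Real.norm_eq_abs] using this
  have hkn : (i.1 : ℕ) + 1 ≤ N := i.isLt
  have hn1 : (1:ℝ) ≤ N := by exact_mod_cast hN
  have hkk : (1:ℝ) ≤ (i.1:ℝ) + 1 := by
    have : (0:ℝ) ≤ (i.1:ℝ) := Nat.cast_nonneg _
    linarith
  have hkkn : ((i.1:ℝ) + 1) ≤ N := by exact_mod_cast hkn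
  have hNpos : (0:ℝ) < N := by exact_mod_cast hN
  have hc0 : 0 < c := by rw [hc]; exact div_pos (by positivity) hNpos
  have hc1 : c ≤ 1 := by rw [hc, div_le_one (by linarith)]; exact hkkn
  -- real moments
  have hm1 : ∫ ω, t i ω ∂μ = ((i.1:ℝ)+1)/(N+1) := by
    rw [integral_eq_lintegral_of_nonneg_ae (hae.mono fun ω h => h.1)
      hmeas.aestronglyMeasurable, moment1 μ u t hu_meas hu_indep hu_map hts i]
    exact ENNReal.toReal_ofReal (by positivity)
  have hm2 : ∫ ω, (t i ω)^2 ∂μ = (((i.1:ℝ)+1)^2 + ((i.1:ℝ)+1))/((N+1)*(N+2)) := by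
    rw [integral_eq_lintegral_of_nonneg_ae (Filter.Eventually.of_forall fun ω => sq_nonneg _)
      ((hmeas.pow_const 2).aestronglyMeasurable), moment2 μ u t hu_meas hu_indep hu_map hts i]
    exact ENNReal.toReal_ofReal (by positivity)
  -- integrability
  have hint_t : Integrable (t i) μ := by
    refine Integrable.mono' (integrable_const 1) hmeas.aestronglyMeasurable ?_
    filter_upwards [hae] with ω h
    rw [Real.norm_eq_abs, abs_le]
    exact ⟨by linarith [h.1], h.2⟩
  have hint_t2 : Integrable (fun ω => (t i ω)^2) μ := by
    refine Integrable.mono' (integrable_const 1) ((hmeas.pow_const 2).aestronglyMeasurable) ?_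
    filter_upwards [hae] with ω h
    rw [Real.norm_eq_abs, abs_of_nonneg (sq_nonneg _)]
    nlinarith [h.1, h.2]
  have hint_sq : Integrable (fun ω => (t i ω - c)^2) μ := by
    have he : (fun ω => (t i ω - c)^2) = fun ω => ((t i ω)^2 - (2*c) * t i ω + c^2) :=
      funext fun ω => by ring
    rw [he]
    exact (hint_t2.sub (hint_t.const_mul _)).add (integrable_const _)
  have hsplit : ∫ ω, (t i ω - c)^2 ∂μ
      = (∫ ω, (t i ω)^2 ∂μ) - 2*c*(∫ ω, t i ω ∂μ) + c^2 := by
    have he : (fun ω => (t i ω - c)^2) = fun ω => ((t i ω)^2 - (2*c) * t i ω + c^2) :=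
      funext fun ω => by ring
    have hint_ct : Integrable (fun ω => 2*c*t i ω) μ := hint_t.const_mul (2*c)
    have hint_sub : Integrable (fun ω => t i ω ^ 2 - 2*c*t i ω) μ := hint_t2.sub hint_ct
    rw [he, integral_add hint_sub (integrable_const _),
      integral_sub hint_t2 hint_ct, integral_const_mul, integral_const]
    simp [measure_univ]
  have hp_cont : Continuous p := hdiff.continuous
  have hmeas_lhs : AEStronglyMeasurable (fun ω => ‖p (t i ω) - p c‖^2) μ :=
    (((hp_cont.measurable.comp hmeas).sub measurable_const).norm.pow_const 2).aestronglyMeasurable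
  have hptwise : ∀ᵐ ω ∂μ, ‖p (t i ω) - p c‖^2 ≤ L^2 * (t i ω - c)^2 := by
    refine Filter.Eventually.of_forall fun ω => ?_
    have h1 := hlip (t i ω) c
    calc ‖p (t i ω) - p c‖^2 ≤ (L * |t i ω - c|)^2 :=
          pow_le_pow_left₀ (norm_nonneg _) h1 2
      _ = L^2 * (t i ω - c)^2 := by rw [mul_pow, sq_abs]
  have hint_lhs : Integrable (fun ω => ‖p (t i ω) - p c‖^2) μ := by
    refine Integrable.mono' (hint_sq.const_mul (L^2)) hmeas_lhs ?_
    filter_upwards [hptwise] with ω h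
    rwa [Real.norm_eq_abs, abs_of_nonneg (by positivity)]
  have hmain : ∫ ω, ‖p (t i ω) - p c‖^2 ∂μ ≤ L^2 * ∫ ω, (t i ω - c)^2 ∂μ := by
    rw [← integral_const_mul]
    exact integral_mono_ae hint_lhs (hint_sq.const_mul _) hptwise
  refine hmain.trans ?_
  rw [hsplit, hm1, hm2]
  refine mul_le_mul_of_nonneg_left ?_ (by positivity : (0:ℝ) ≤ L^2)
  -- pure arithmetic
  set n : ℝ := (N : ℝ) with hn
  set kk : ℝ := (i.1:ℝ) + 1 with hkkdef
  have hs2 : Real.sqrt n ^ 2 = n := Real.sq_sqrt (by linarith)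
  have hs1 : 1 ≤ Real.sqrt n := by
    nlinarith [Real.sqrt_nonneg n]
  have hsn : Real.sqrt n ≤ n := by nlinarith [Real.sqrt_nonneg n]
  have hident : (kk^2 + kk)/((n+1)*(n+2)) - 2*c*(kk/(n+1)) + c^2
      = kk*(n+1-kk)/((n+1)^2*(n+2)) + kk^2/(n^2*(n+1)^2) := by
    rw [hc]
    have h1 : n ≠ 0 := by linarith
    have h2 : n + 1 ≠ 0 := by linarith
    have h3 : n + 2 ≠ 0 := by linarith
    field_simp
    ring
  rw [hident]
  have hb1 : kk*(n+1-kk)/((n+1)^2*(n+2)) ≤ 1/(4*n) := by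
    rw [div_le_div_iff₀ (by positivity) (by positivity)]
    nlinarith [sq_nonneg (n+1-2*kk), sq_nonneg (n+1)]
  have hb2 : kk^2/(n^2*(n+1)^2) ≤ 1/(n * Real.sqrt n) := by
    have e1 : n * Real.sqrt n ≤ n^2 := by nlinarith
    have e2 : kk^2 ≤ n^2 := by nlinarith
    have e3 : kk^2 * (n * Real.sqrt n) ≤ n^2 * n^2 :=
      mul_le_mul e2 e1 (by positivity) (by positivity)
    rw [div_le_div_iff₀ (by positivity) (by nlinarith)]
    nlinarith [e3, sq_nonneg n]
  calc kk*(n+1-kk)/((n+1)^2*(n+2)) + kk^2/(n^2*(n+1)^2)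
      ≤ 1/(4*n) + 1/(n * Real.sqrt n) := add_le_add hb1 hb2
    _ = 1/(4*n) + 1/(n * Real.sqrt n) := rfl
end
end

section
/- Let p : ℝ → ℂ be 1-periodic and differentiable with ‖p'‖_∞ ≤ 2π k0, and let h be a good(δ̄, N_δ̄) bijection. Then there is an absolute constant C such that for every i with |i − h(i)| ≤ δ̄: E[ |p(t_{h(i)}) − p(t_i)|² ] ≤ C·( k0²/N + δ̄²·k0²/N² ). -/
open MeasureTheory ProbabilityTheory Finset
open scoped ENNReal NNReal

noncomputable section

lemma chernoff_cell {Ω : Type} [MeasurableSpace Ω] (μ : Measure Ω)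
    [IsProbabilityMeasure μ] {N : ℕ} (u : Fin N → Ω → ℝ) (hmeas : ∀ k, Measurable (u k))
    (hind : iIndepFun u μ)
    (hlaw : ∀ k, Measure.map (u k) μ = (ENNReal.ofReal 1)⁻¹ • volume.restrict (Set.Icc 0 1))
    (a b : ℝ) (hab : a ≤ b) (ha : 0 ≤ a) (hb : b ≤ 1) (r : ℝ) :
    (μ {ω | (∑ k, if u k ω ∈ Set.Ioo a b then (1:ℝ) else 0) ≤ r}).toReal
      ≤ Real.exp (Real.log 2 * r) * (1 - (b - a)/2) ^ N := by
  classical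
  set g : ℝ → ℝ := fun x => if x ∈ Set.Ioo a b then (1:ℝ) else 0 with hg_def
  have hg : Measurable g := Measurable.ite measurableSet_Ioo measurable_const measurable_const
  set X : Fin N → Ω → ℝ := fun k => g ∘ u k with hX_def
  have hX : ∀ k, Measurable (X k) := fun k => hg.comp (hmeas k)
  have hindX : iIndepFun X μ := hind.comp (fun _ => g) (fun _ => hg)
  set T : ℝ := -Real.log 2 with hT_def
  have hT : T ≤ 0 := neg_nonpos.mpr (Real.log_nonneg one_le_two)
  have hexpT : Real.exp T = 1/2 := by
    rw [hT_def, Real.exp_neg, Real.exp_log two_pos]; norm_num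
  -- the sum function
  have hsum_eq : (fun ω => ∑ k, if u k ω ∈ Set.Ioo a b then (1:ℝ) else 0)
      = (∑ k, X k) := by
    ext ω; rw [Finset.sum_apply]; rfl
  -- integrability of exp (T * S)
  have hSmeas : Measurable (∑ k, X k) := by
    rw [← hsum_eq]
    exact Finset.measurable_sum Finset.univ fun k _ =>
      Measurable.ite ((hmeas k) measurableSet_Ioo) measurable_const measurable_const
  have hSnonneg : ∀ ω, 0 ≤ (∑ k, X k) ω := by
    intro ω
    rw [Finset.sum_apply]
    exact Finset.sum_nonneg fun k _ => by dsimp [X, g]; split_ifs <;> norm_num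
  have hint : Integrable (fun ω => Real.exp (T * (∑ k, X k) ω)) μ := by
    refine Integrable.mono' (integrable_const 1)
      ((hSmeas.const_mul T).exp.aestronglyMeasurable) (ae_of_all _ fun ω => ?_)
    rw [Real.norm_eq_abs, abs_of_pos (Real.exp_pos _)]
    exact Real.exp_le_one_iff.mpr (mul_nonpos_of_nonpos_of_nonneg hT (hSnonneg ω))
  -- mgf of each X k
  have hmgf : ∀ k, mgf (X k) μ T = 1 - (b - a)/2 := by
    intro k
    have hfun : ∀ x : ℝ, Real.exp (T * g x) = 1 + Set.indicator (Set.Ioo a b)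
        (fun _ => Real.exp T - 1) x := by
      intro x
      by_cases hx : x ∈ Set.Ioo a b
      · rw [show g x = 1 from if_pos hx, Set.indicator_of_mem hx, mul_one]; ring
      · rw [show g x = 0 from if_neg hx, Set.indicator_of_notMem hx, mul_zero,
          Real.exp_zero]; ring
    have hsub : Set.Ioo a b ⊆ Set.Icc (0:ℝ) 1 := fun x hx =>
      ⟨le_trans ha hx.1.le, le_trans hx.2.le hb⟩
    have hfin : IsFiniteMeasure (volume.restrict (Set.Icc (0:ℝ) 1)) := by
      constructor
      rw [Measure.restrict_apply_univ]
      simp [Real.volume_Icc]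
    have hmeas2 : Measurable fun x : ℝ => Real.exp (T * g x) :=
      ((hg.const_mul T).exp)
    calc mgf (X k) μ T = ∫ ω, Real.exp (T * g (u k ω)) ∂μ := rfl
      _ = ∫ x, Real.exp (T * g x) ∂(Measure.map (u k) μ) := by
          rw [integral_map (hmeas k).aemeasurable hmeas2.aestronglyMeasurable]
      _ = ∫ x, Real.exp (T * g x) ∂(volume.restrict (Set.Icc (0:ℝ) 1)) := by
          rw [hlaw k]; simp
      _ = ∫ x, (1 + Set.indicator (Set.Ioo a b) (fun _ => Real.exp T - 1) x)
            ∂(volume.restrict (Set.Icc (0:ℝ) 1)) := by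
          congr 1; ext x; exact hfun x
      _ = 1 - (b - a)/2 := by
          rw [integral_add (integrable_const 1)
            ((integrable_const (Real.exp T - 1)).indicator measurableSet_Ioo)]
          rw [integral_const, integral_indicator_const _ measurableSet_Ioo]
          simp only [measureReal_def]
          rw [Measure.restrict_apply_univ, Measure.restrict_apply measurableSet_Ioo,
            Set.inter_eq_self_of_subset_left hsub]
          simp only [Real.volume_Icc, Real.volume_Ioo, smul_eq_mul]
          rw [ENNReal.toReal_ofReal (by linarith), ENNReal.toReal_ofReal (by linarith)]
          rw [hexpT]; ring
  -- assemble
  have hset : {ω | (∑ k, if u k ω ∈ Set.Ioo a b then (1:ℝ) else 0) ≤ r}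
      = {ω | (∑ k, X k) ω ≤ r} := by
    ext ω; simp only [Set.mem_setOf_eq, Finset.sum_apply]; rfl
  rw [hset]
  calc (μ {ω | (∑ k, X k) ω ≤ r}).toReal
      ≤ Real.exp (-T * r) * mgf (∑ k, X k) μ T :=
        measure_le_le_exp_mul_mgf r hT hint
    _ = Real.exp (Real.log 2 * r) * (1 - (b - a)/2) ^ N := by
        rw [hindX.mgf_sum hX Finset.univ]
        simp only [hT_def, neg_neg]
        rw [Finset.prod_congr rfl (fun k _ => hmgf k), Finset.prod_const,
          Finset.card_univ, Fintype.card_fin]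

lemma coverage {N : ℕ} (u tt : Fin N → ℝ) (σ : Equiv.Perm (Fin N))
    (hperm : ∀ k, tt k = u (σ k)) (hmono : Monotone tt)
    (hu : ∀ k, u k ∈ Set.Icc (0:ℝ) 1) (i j : Fin N) (hij : i ≤ j)
    {s : ℝ} (hs : 0 < s) (hgap : s < tt j - tt i) :
    ∃ m : ℕ, (m : ℝ) ≤ 2 / s ∧ ((m : ℝ) + 1) * (s / 2) ≤ 1 ∧
      (∑ k, if u k ∈ Set.Ioo ((m : ℝ) * (s / 2)) ((m : ℝ) * (s / 2) + s / 2) then (1:ℝ) else 0)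
        ≤ (j.1 : ℝ) - (i.1 : ℝ) - 1 := by
  classical
  set a : ℝ := tt i with ha_def
  set b : ℝ := tt j with hb_def
  have ha0 : 0 ≤ a := by rw [ha_def, hperm]; exact (hu _).1
  have hb1 : b ≤ 1 := by rw [hb_def, hperm]; exact (hu _).2
  have hij' : i < j := by
    rcases lt_or_eq_of_le hij with h | h
    · exact h
    · exfalso; rw [ha_def, hb_def, h] at hgap; linarith
  have hdiv0 : (0:ℝ) ≤ 2 * a / s := div_nonneg (by linarith) hs.le
  have hcancel : (2 * a / s) * s = 2 * a := div_mul_cancel₀ _ hs.ne'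
  refine ⟨⌈2 * a / s⌉₊, ?_, ?_, ?_⟩
  case _ =>
    have hm2 : (⌈2 * a / s⌉₊ : ℝ) < 2 * a / s + 1 := Nat.ceil_lt_add_one hdiv0
    rw [le_div_iff₀ hs]
    nlinarith
  case _ =>
    have hm2 : (⌈2 * a / s⌉₊ : ℝ) < 2 * a / s + 1 := Nat.ceil_lt_add_one hdiv0
    nlinarith
  case _ =>
    set m : ℕ := ⌈2 * a / s⌉₊ with hm_def
    have hm1 : 2 * a / s ≤ (m : ℝ) := Nat.le_ceil _
    have hm2 : (m : ℝ) < 2 * a / s + 1 := Nat.ceil_lt_add_one hdiv0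
    have h2as : (2 * a / s) * (s / 2) = a := by field_simp
    have hc1 : a ≤ (m : ℝ) * (s / 2) := by nlinarith
    have hc2 : (m : ℝ) * (s / 2) + s / 2 < b := by nlinarith
    -- reindex the sum through the permutation
    have hre : (∑ k, if u k ∈ Set.Ioo ((m : ℝ) * (s / 2)) ((m : ℝ) * (s / 2) + s / 2)
          then (1:ℝ) else 0)
        = ∑ k, if tt k ∈ Set.Ioo ((m : ℝ) * (s / 2)) ((m : ℝ) * (s / 2) + s / 2)
          then (1:ℝ) else 0 := by
      rw [← Equiv.sum_comp σ (fun k => if u k ∈ Set.Ioo ((m : ℝ) * (s / 2))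
        ((m : ℝ) * (s / 2) + s / 2) then (1:ℝ) else 0)]
      exact Finset.sum_congr rfl fun k _ => by rw [hperm k]
    rw [hre]
    have hle : ∀ k : Fin N,
        (if tt k ∈ Set.Ioo ((m : ℝ) * (s / 2)) ((m : ℝ) * (s / 2) + s / 2) then (1:ℝ) else 0)
        ≤ if i.1 < k.1 ∧ k.1 < j.1 then (1:ℝ) else 0 := by
      intro k
      by_cases hk : tt k ∈ Set.Ioo ((m : ℝ) * (s / 2)) ((m : ℝ) * (s / 2) + s / 2)
      · have hki : i < k := by
          by_contra hcon
          push_neg at hcon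
          have := hmono hcon
          have := hk.1
          simp only [ha_def] at *
          linarith
        have hkj : k < j := by
          by_contra hcon
          push_neg at hcon
          have := hmono hcon
          have := hk.2
          simp only [hb_def] at *
          linarith
        rw [if_pos hk, if_pos ⟨hki, hkj⟩]
      · rw [if_neg hk]
        split_ifs <;> norm_num
    refine le_trans (Finset.sum_le_sum fun k _ => hle k) ?_
    have hcount : (∑ k : Fin N, if i.1 < k.1 ∧ k.1 < j.1 then (1:ℝ) else 0)
        = ((Finset.Ioo i.1 j.1).card : ℝ) := by
      rw [Fin.sum_univ_eq_sum_range (fun n => if i.1 < n ∧ n < j.1 then (1:ℝ) else 0) N]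
      rw [Finset.sum_boole]
      congr 1
      have : (Finset.range N).filter (fun n => i.1 < n ∧ n < j.1) = Finset.Ioo i.1 j.1 := by
        ext n
        simp only [Finset.mem_filter, Finset.mem_range, Finset.mem_Ioo]
        have := j.2
        omega
      rw [this]
    rw [hcount, Nat.card_Ioo]
    have hij2 : i.1 < j.1 := hij'
    rw [Nat.cast_sub (by omega), Nat.cast_sub (by omega), Nat.cast_one]

/-- A permutation `h` of `{1, …, N}` is `good(δ, Nδ)` if at most `Nδ` indices are
moved by more than `δ`. -/
def GoodPerm {N : ℕ} (δ Nδ : ℕ) (h : Equiv.Perm (Fin N)) : Prop :=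
  (Finset.univ.filter fun i : Fin N => (δ : ℤ) < |(i.1 : ℤ) - ((h i).1 : ℤ)|).card ≤ Nδ

set_option maxHeartbeats 1600000 in
/-- There is an absolute constant `C` such that, for any 1-periodic
differentiable `p` with `‖p'‖_∞ ≤ 2π k0` and any `good(δ̄, N_δ̄)` permutation `h`, for
every `i` with `|i − h(i)| ≤ δ̄`:
`E[|p(t_{h(i)}) − p(t_i)|²] ≤ C (k0²/N + δ̄² k0²/N²)`. -/
theorem misordering_smooth_bound :
    ∃ C : ℝ, ∀ (p : ℝ → ℂ) (k0 N : ℕ) (δ Nδ : ℕ) (Ω : Type) [MeasurableSpace Ω]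
      (μ : Measure Ω) [IsProbabilityMeasure μ] (t : Fin N → Ω → ℝ)
      (h : Equiv.Perm (Fin N)) (i : Fin N),
      Function.Periodic p 1 →
      Differentiable ℝ p →
      (∀ x : ℝ, ‖deriv p x‖ ≤ 2 * Real.pi * k0) →
      IsUniformOrderStats μ 1 t →
      GoodPerm δ Nδ h →
      |(i.1 : ℤ) - ((h i).1 : ℤ)| ≤ (δ : ℤ) →
      (∫ ω, ‖p (t (h i) ω) - p (t i ω)‖ ^ 2 ∂μ)
        ≤ C * ((k0 : ℝ) ^ 2 / N + (δ : ℝ) ^ 2 * (k0 : ℝ) ^ 2 / (N : ℝ) ^ 2) := by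
  classical
  use 262144
  intro p k0 N δ Nδ Ω _ μ _ t h i hper hdiff hderiv hstats hgood hmove
  have hRHS0 : (0:ℝ) ≤ 262144 * ((k0 : ℝ) ^ 2 / N + (δ : ℝ) ^ 2 * (k0 : ℝ) ^ 2 / (N : ℝ) ^ 2) := by
    positivity
  by_cases hii : h i = i
  · rw [hii]
    have h0 : (∫ ω, ‖p (t i ω) - p (t i ω)‖ ^ 2 ∂μ) = 0 := by simp
    rw [h0]; exact hRHS0
  obtain ⟨u, hmeas, hind, hlaw, hty⟩ := hstats
  set i' := min i (h i) with hi'_def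
  set j' := max i (h i) with hj'_def
  have hij' : i' < j' := min_lt_max.mpr fun hcon => hii hcon.symm
  have hvlt : i'.1 < j'.1 := hij'
  set d : ℕ := j'.1 - i'.1 with hd_def
  have hd1 : 1 ≤ d := by omega
  have hN : 0 < N := i.pos
  have hN2 : 2 ≤ N := by have := j'.2; omega
  have hNR : (1:ℝ) ≤ N := by exact_mod_cast hN
  have hN0 : (N:ℝ) ≠ 0 := by positivity
  have hd0 : (0:ℝ) ≤ (d:ℝ) := Nat.cast_nonneg d
  have hdδ : (d:ℝ) ≤ (δ:ℝ) := by
    have hint : (d:ℤ) ≤ (δ:ℤ) := by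
      rw [abs_le] at hmove
      obtain ⟨hm1, hm2⟩ := hmove
      rcases le_total i (h i) with hle | hle
      · have h1 : i.1 ≤ (h i).1 := hle
        have h2 : i' = i := min_eq_left hle
        have h3 : j' = h i := max_eq_right hle
        rw [hd_def, h2, h3]; omega
      · have h1 : (h i).1 ≤ i.1 := hle
        have h2 : i' = h i := min_eq_right hle
        have h3 : j' = i := max_eq_left hle
        rw [hd_def, h2, h3]; omega
    exact_mod_cast hint
  set L : ℝ := 2 * Real.pi * k0 with hL_def
  have hL0 : 0 ≤ L := by positivity
  have hlip : LipschitzWith (Real.toNNReal L) p := by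
    apply lipschitzWith_of_nnnorm_deriv_le hdiff
    intro x
    rw [← NNReal.coe_le_coe, coe_nnnorm, Real.coe_toNNReal _ hL0]
    exact hderiv x
  have hpt : ∀ ω, ‖p (t (h i) ω) - p (t i ω)‖ ≤ L * (t j' ω - t i' ω) := by
    intro ω
    have hmono := (hty ω).1
    have h1 : dist (p (t (h i) ω)) (p (t i ω)) ≤ L * dist (t (h i) ω) (t i ω) := by
      have h2 := hlip.dist_le_mul (t (h i) ω) (t i ω)
      rwa [Real.coe_toNNReal _ hL0] at h2
    rw [dist_eq_norm, Real.dist_eq] at h1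
    have habs : |t (h i) ω - t i ω| = t j' ω - t i' ω := by
      rcases le_total i (h i) with hle | hle
      · rw [hi'_def, hj'_def, min_eq_left hle, max_eq_right hle,
          abs_of_nonneg (sub_nonneg.2 (hmono hle))]
      · rw [hi'_def, hj'_def, min_eq_right hle, max_eq_left hle,
          abs_of_nonpos (sub_nonpos.2 (hmono hle))]
        ring
    rw [habs] at h1
    exact h1
  have hae : ∀ᵐ ω ∂μ, ∀ k, u k ω ∈ Set.Icc (0:ℝ) 1 := by
    rw [MeasureTheory.ae_all_iff]
    intro k
    have h0 : μ (u k ⁻¹' (Set.Icc (0:ℝ) 1)ᶜ) = 0 := by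
      rw [← Measure.map_apply (hmeas k) measurableSet_Icc.compl, hlaw k]
      simp [Measure.smul_apply, Measure.restrict_apply measurableSet_Icc.compl]
    rw [ae_iff]
    exact h0
  -- parameters
  set s : ℝ := 4 * ((d:ℝ) * Real.log 2 + 2 * Real.log ((N:ℝ)+1)) / N with hs_def
  have hlog2 : (0:ℝ) < Real.log 2 := Real.log_pos one_lt_two
  have hlogN : (0:ℝ) < Real.log ((N:ℝ)+1) := Real.log_pos (by linarith)
  have hs0 : 0 < s := by
    apply div_pos _ (by positivity)
    nlinarith [mul_nonneg hd0 hlog2.le]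
  have hsN : s * N = 4 * ((d:ℝ) * Real.log 2 + 2 * Real.log ((N:ℝ)+1)) := by
    rw [hs_def]; field_simp
  set M : ℕ := ⌊2/s⌋₊ + 1 with hM_def
  set fam : Finset ℕ := (Finset.range M).filter (fun m => ((m:ℝ)+1) * (s/2) ≤ 1) with hfam_def
  set E : ℕ → Set Ω := fun m => {ω | (∑ k, if u k ω ∈
      Set.Ioo ((m:ℝ)*(s/2)) ((m:ℝ)*(s/2) + s/2) then (1:ℝ) else 0) ≤ (d:ℝ) - 1} with hE_def
  have hSmeas : ∀ m : ℕ, Measurable (fun ω => (∑ k, if u k ω ∈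
      Set.Ioo ((m:ℝ)*(s/2)) ((m:ℝ)*(s/2) + s/2) then (1:ℝ) else 0)) := fun m =>
    Finset.measurable_sum Finset.univ fun k _ =>
      Measurable.ite ((hmeas k) measurableSet_Ioo) measurable_const measurable_const
  have hEmeas : ∀ m, MeasurableSet (E m) := fun m => measurableSet_le (hSmeas m) measurable_const
  set U : Set Ω := ⋃ m ∈ fam, E m with hU_def
  have hUmeas : MeasurableSet U := fam.measurableSet_biUnion fun m _ => hEmeas m
  set β : ℝ := Real.exp (Real.log 2 * ((d:ℝ)-1)) * (1 - s/4)^N with hβ_def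
  have hEμ : ∀ m ∈ fam, μ (E m) ≤ ENNReal.ofReal β := by
    intro m hm
    rw [hfam_def, Finset.mem_filter] at hm
    have hcell1 : (0:ℝ) ≤ (m:ℝ) * (s/2) := by positivity
    have hcell2 : (m:ℝ)*(s/2) + s/2 ≤ 1 := by nlinarith [hm.2]
    have hch := chernoff_cell μ u hmeas hind hlaw ((m:ℝ)*(s/2)) ((m:ℝ)*(s/2) + s/2)
      (by nlinarith) hcell1 hcell2 ((d:ℝ)-1)
    rw [show (m:ℝ)*(s/2) + s/2 - (m:ℝ)*(s/2) = s/2 by ring] at hch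
    rw [show (1:ℝ) - s/2/2 = 1 - s/4 by ring] at hch
    have hEeq : E m = {ω | (∑ k, if u k ω ∈
        Set.Ioo ((m:ℝ)*(s/2)) ((m:ℝ)*(s/2) + s/2) then (1:ℝ) else 0) ≤ (d:ℝ) - 1} := by
      rw [hE_def]
    rw [hEeq]
    calc μ _ = ENNReal.ofReal ((μ _).toReal) := (ENNReal.ofReal_toReal (measure_ne_top μ _)).symm
      _ ≤ ENNReal.ofReal β := ENNReal.ofReal_le_ofReal hch
  have hUb : μ U ≤ ∑ m ∈ fam, μ (E m) := by
    rw [hU_def]; exact measure_biUnion_finset_le fam E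
  have hUμ : μ U ≤ (M : ℝ≥0∞) * ENNReal.ofReal β := by
    calc μ U ≤ ∑ m ∈ fam, μ (E m) := hUb
      _ ≤ ∑ m ∈ fam, ENNReal.ofReal β := Finset.sum_le_sum hEμ
      _ = (fam.card : ℝ≥0∞) * ENNReal.ofReal β := by rw [Finset.sum_const, nsmul_eq_mul]
      _ ≤ (M : ℝ≥0∞) * ENNReal.ofReal β := by
          apply mul_le_mul_left
          have : fam.card ≤ M := le_trans (Finset.card_filter_le _ _) (by simp)
          exact_mod_cast this
  have hτ0 : 0 ≤ (μ U).toReal := ENNReal.toReal_nonneg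
  have hτ1 : (μ U).toReal ≤ 1 := by
    have h1 : μ U ≤ 1 := prob_le_one
    calc (μ U).toReal ≤ (1:ℝ≥0∞).toReal := ENNReal.toReal_mono (by simp) h1
      _ = 1 := by simp
  have htail : s ≤ 1 → (μ U).toReal ≤ 1/(N:ℝ) := by
    intro hs1
    have hβ0 : 0 ≤ β := by
      apply mul_nonneg (Real.exp_nonneg _)
      apply pow_nonneg; linarith
    have hμU2 : (μ U).toReal ≤ (M:ℝ) * β := by
      refine ENNReal.toReal_le_of_le_ofReal (by positivity) ?_
      calc μ U ≤ (M:ℝ≥0∞) * ENNReal.ofReal β := hUμ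
        _ = ENNReal.ofReal ((M:ℝ) * β) := by
            rw [ENNReal.ofReal_mul (Nat.cast_nonneg M)]
            congr 1
            exact (ENNReal.ofReal_natCast M).symm
    have hsN5 : 5 ≤ s * N := by
      rw [hsN]
      have hll : Real.log 2 ≤ Real.log ((N:ℝ)+1) := by
        apply Real.log_le_log (by norm_num)
        linarith
      have hl29 : (0.6931471803:ℝ) < Real.log 2 := Real.log_two_gt_d9
      nlinarith [mul_nonneg hd0 hlog2.le]
    have hM_le : (M:ℝ) ≤ (N:ℝ) := by
      have hfl : (⌊2/s⌋₊:ℝ) ≤ 2/s := Nat.floor_le (by positivity)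
      have h2s : 2/s ≤ 2*(N:ℝ)/5 := by
        rw [div_le_div_iff₀ hs0 (by norm_num)]
        nlinarith
      have hMc : (M:ℝ) = (⌊2/s⌋₊:ℝ) + 1 := by rw [hM_def]; push_cast; ring
      have hN2R : (2:ℝ) ≤ N := by exact_mod_cast hN2
      rw [hMc]
      linarith
    have hβle : β ≤ 1/(2*((N:ℝ)+1)^2) := by
      have he0 : 1 - s/4 ≤ Real.exp (-(s/4)) := by
        nlinarith [Real.add_one_le_exp (-(s/4))]
      have he1 : (1 - s/4)^N ≤ Real.exp (-(s/4))^N := pow_le_pow_left₀ (by linarith) he0 N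
      have he2 : Real.exp (-(s/4))^N = Real.exp (-((N:ℝ) * (s/4))) := by
        rw [← Real.exp_nat_mul]; congr 1; ring
      have hNs4 : (N:ℝ) * (s/4) = (d:ℝ)*Real.log 2 + 2*Real.log ((N:ℝ)+1) := by
        nlinarith [hsN]
      have hfinal : Real.exp (Real.log 2 * ((d:ℝ)-1)) *
          Real.exp (-((d:ℝ)*Real.log 2 + 2*Real.log ((N:ℝ)+1))) = 1/(2*((N:ℝ)+1)^2) := by
        rw [← Real.exp_add]
        rw [show Real.log 2 * ((d:ℝ)-1) + -((d:ℝ)*Real.log 2 + 2*Real.log ((N:ℝ)+1))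
            = -(Real.log 2 + Real.log (((N:ℝ)+1)^2)) by rw [Real.log_pow]; push_cast; ring]
        rw [← Real.log_mul (by norm_num) (by positivity)]
        rw [Real.exp_neg, Real.exp_log (by positivity)]
        rw [one_div]
      calc β ≤ Real.exp (Real.log 2 * ((d:ℝ)-1)) * Real.exp (-((N:ℝ) * (s/4))) := by
            rw [hβ_def]
            apply mul_le_mul_of_nonneg_left _ (Real.exp_nonneg _)
            rw [← he2]; exact he1
        _ = 1/(2*((N:ℝ)+1)^2) := by rw [hNs4]; exact hfinal
    calc (μ U).toReal ≤ (M:ℝ) * β := hμU2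
      _ ≤ (N:ℝ) * (1/(2*((N:ℝ)+1)^2)) := by
          apply mul_le_mul hM_le hβle hβ0 (by linarith)
      _ = (N:ℝ)/(2*((N:ℝ)+1)^2) := by ring
      _ ≤ 1/(N:ℝ) := by
          rw [div_le_div_iff₀ (by positivity) (by positivity)]
          nlinarith
  -- pointwise a.e. bound
  have hptwise : ∀ᵐ ω ∂μ, ENNReal.ofReal (‖p (t (h i) ω) - p (t i ω)‖^2)
      ≤ ENNReal.ofReal (L^2 * s^2) + U.indicator (fun _ => ENNReal.ofReal (L^2)) ω := by
    filter_upwards [hae] with ω hω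
    obtain ⟨hmono, σ, hσ⟩ := hty ω
    have hΔ0 : 0 ≤ t j' ω - t i' ω := sub_nonneg.2 (hmono hij'.le)
    have hfb : ‖p (t (h i) ω) - p (t i ω)‖^2 ≤ L^2 * (t j' ω - t i' ω)^2 := by
      have h1 := hpt ω
      have h2 := pow_le_pow_left₀ (norm_nonneg _) h1 2
      calc ‖p (t (h i) ω) - p (t i ω)‖^2 ≤ (L * (t j' ω - t i' ω))^2 := h2
        _ = L^2 * (t j' ω - t i' ω)^2 := by ring
    by_cases hcase : t j' ω - t i' ω ≤ s
    · refine le_trans (ENNReal.ofReal_le_ofReal ?_) le_self_add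
      calc ‖p (t (h i) ω) - p (t i ω)‖^2 ≤ L^2 * (t j' ω - t i' ω)^2 := hfb
        _ ≤ L^2 * s^2 := by
            apply mul_le_mul_of_nonneg_left _ (sq_nonneg L)
            nlinarith
    · push_neg at hcase
      obtain ⟨m, hmm1, hmm2, hmm3⟩ := coverage (fun k => u k ω) (fun k => t k ω) σ hσ
        hmono hω i' j' hij'.le hs0 hcase
      have hdcast : (d:ℝ) = (j'.1:ℝ) - (i'.1:ℝ) := by
        rw [hd_def, Nat.cast_sub hvlt.le]
      have hfam_mem : m ∈ fam := by
        rw [hfam_def, Finset.mem_filter]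
        refine ⟨?_, hmm2⟩
        rw [Finset.mem_range, hM_def]
        have hfloor : m ≤ ⌊2/s⌋₊ := Nat.le_floor hmm1
        omega
      have hEmem : ω ∈ E m := by
        rw [hE_def]
        simp only [Set.mem_setOf_eq]
        rw [hdcast]
        linarith [hmm3]
      have hmem : ω ∈ U := by
        rw [hU_def]
        exact Set.mem_biUnion hfam_mem hEmem
      rw [Set.indicator_of_mem hmem]
      have hΔ1 : t j' ω - t i' ω ≤ 1 := by
        have h1 : t j' ω ≤ 1 := by rw [hσ j']; exact (hω _).2
        have h2 : 0 ≤ t i' ω := by rw [hσ i']; exact (hω _).1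
        linarith
      refine le_trans (ENNReal.ofReal_le_ofReal ?_) le_add_self
      calc ‖p (t (h i) ω) - p (t i ω)‖^2 ≤ L^2 * (t j' ω - t i' ω)^2 := hfb
        _ ≤ L^2 * 1 := by
            apply mul_le_mul_of_nonneg_left _ (sq_nonneg L)
            nlinarith
        _ = L^2 := mul_one _
  -- integral assembly
  by_cases hI : Integrable (fun ω => ‖p (t (h i) ω) - p (t i ω)‖^2) μ
  case neg => rw [integral_undef hI]; exact hRHS0
  rw [integral_eq_lintegral_of_nonneg_ae (ae_of_all _ fun ω => by positivity) hI.1]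
  have hlin : (∫⁻ ω, ENNReal.ofReal (‖p (t (h i) ω) - p (t i ω)‖^2) ∂μ)
      ≤ ENNReal.ofReal (L^2*s^2) + ENNReal.ofReal (L^2) * μ U := by
    calc (∫⁻ ω, ENNReal.ofReal (‖p (t (h i) ω) - p (t i ω)‖^2) ∂μ)
        ≤ ∫⁻ ω, (ENNReal.ofReal (L^2*s^2) + U.indicator (fun _ => ENNReal.ofReal (L^2)) ω) ∂μ :=
          lintegral_mono_ae hptwise
      _ = ENNReal.ofReal (L^2*s^2) + ENNReal.ofReal (L^2) * μ U := by
          rw [lintegral_add_left measurable_const, lintegral_const,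
            lintegral_indicator_const hUmeas]
          simp [measure_univ]
  have hmulfin : ENNReal.ofReal (L^2) * μ U ≠ ⊤ :=
    ENNReal.mul_ne_top ENNReal.ofReal_ne_top (measure_ne_top μ U)
  have hfin : (ENNReal.ofReal (L^2*s^2) + ENNReal.ofReal (L^2) * μ U) ≠ ⊤ :=
    ENNReal.add_ne_top.2 ⟨ENNReal.ofReal_ne_top, hmulfin⟩
  have hToReal : (∫⁻ ω, ENNReal.ofReal (‖p (t (h i) ω) - p (t i ω)‖^2) ∂μ).toReal
      ≤ L^2*s^2 + L^2 * (μ U).toReal := by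
    refine le_trans (ENNReal.toReal_mono hfin hlin) ?_
    rw [ENNReal.toReal_add ENNReal.ofReal_ne_top hmulfin, ENNReal.toReal_mul,
      ENNReal.toReal_ofReal (by positivity), ENNReal.toReal_ofReal (by positivity)]
  refine le_trans hToReal ?_
  set τ := (μ U).toReal with hτ_def
  -- numeric endgame
  have hL2 : L^2 ≤ 64 * (k0:ℝ)^2 := by
    have h4 := Real.pi_le_four
    have hπ := Real.pi_pos
    have hk00 : (0:ℝ) ≤ k0 := Nat.cast_nonneg _
    rw [hL_def]
    have hpisq : Real.pi * Real.pi ≤ 16 := by nlinarith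
    nlinarith [mul_le_mul_of_nonneg_right hpisq (sq_nonneg (k0:ℝ)), sq_nonneg (k0:ℝ)]
  have hlogsq : (Real.log ((N:ℝ)+1))^2 ≤ 8*(N:ℝ) := by
    have hx : (0:ℝ) < Real.sqrt ((N:ℝ)+1) := Real.sqrt_pos.2 (by linarith)
    have h2 := Real.log_le_sub_one_of_pos hx
    rw [Real.log_sqrt (by linarith)] at h2
    have h3 : Real.sqrt ((N:ℝ)+1)^2 = (N:ℝ)+1 := Real.sq_sqrt (by linarith)
    nlinarith [hlogN.le, Real.sqrt_nonneg ((N:ℝ)+1)]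
  have hlog2le : Real.log 2 ≤ 1 := by
    have := Real.log_le_sub_one_of_pos (by norm_num : (0:ℝ) < 2); linarith
  have hsN2 : (s*N)^2 ≤ 32*(d:ℝ)^2 + 1024*(N:ℝ) := by
    rw [hsN]
    have hA : ((d:ℝ)*Real.log 2)^2 ≤ (d:ℝ)^2 := by
      rw [mul_pow]
      exact mul_le_of_le_one_right (sq_nonneg _) (by nlinarith)
    nlinarith [sq_nonneg ((d:ℝ)*Real.log 2 - 2*Real.log ((N:ℝ)+1)), hlogsq, hA,
      mul_nonneg hd0 hlog2.le, hlogN.le]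
  have hkey : (s^2 + τ)*(N:ℝ)^2 ≤ 64*(d:ℝ)^2 + 2048*(N:ℝ) := by
    have hss : s^2*(N:ℝ)^2 = (s*N)^2 := by ring
    by_cases hs1 : s ≤ 1
    · have ht := htail hs1
      have ht2 : τ*(N:ℝ)^2 ≤ (N:ℝ) := by
        have := mul_le_mul_of_nonneg_right ht (sq_nonneg (N:ℝ))
        calc τ*(N:ℝ)^2 ≤ (1/(N:ℝ))*(N:ℝ)^2 := this
          _ = (N:ℝ) := by field_simp
      nlinarith
    · push_neg at hs1
      have hτs : τ ≤ s^2 := by nlinarith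
      nlinarith
  have hN2pos : (0:ℝ) < (N:ℝ)^2 := by positivity
  have hgoal2 : (L^2*s^2 + L^2*τ)*(N:ℝ)^2 ≤ 262144*((k0:ℝ)^2*(N:ℝ) + (δ:ℝ)^2*(k0:ℝ)^2) := by
    have hk00 : (0:ℝ) ≤ (k0:ℝ)^2 := sq_nonneg _
    have e1 : (L^2*s^2 + L^2*τ)*(N:ℝ)^2 = L^2 * ((s^2+τ)*(N:ℝ)^2) := by ring
    rw [e1]
    have hnn : (0:ℝ) ≤ (s^2+τ)*(N:ℝ)^2 := by positivity
    calc L^2 * ((s^2+τ)*(N:ℝ)^2) ≤ (64*(k0:ℝ)^2) * (64*(d:ℝ)^2 + 2048*(N:ℝ)) := by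
          apply mul_le_mul hL2 hkey hnn (by positivity)
      _ ≤ 262144*((k0:ℝ)^2*(N:ℝ) + (δ:ℝ)^2*(k0:ℝ)^2) := by
          have hd2 : (d:ℝ)^2 ≤ (δ:ℝ)^2 := by nlinarith
          nlinarith [mul_le_mul_of_nonneg_left hd2 hk00, hNR, hk00]
  have hfinal : L^2*s^2 + L^2*τ ≤ 262144*((k0:ℝ)^2*(N:ℝ) + (δ:ℝ)^2*(k0:ℝ)^2)/(N:ℝ)^2 := by
    rw [le_div_iff₀ hN2pos]
    exact hgoal2
  refine le_trans hfinal (le_of_eq ?_)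
  field_simp
end
end
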